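/- arXiv:2104.08609 — 9 statements merged into one kernel-verified Lean document; each statement's English description precedes it below -/
import Mathlib

section
/- Let ν be a valuation on K[x] and q ∈ K[x] a non-constant polynomial such that ν(q) is torsion-free over the value group νK (i.e., no positive integer multiple of ν(q) lies in the divisible hull of νK), while for every f ∈ K[x] with deg(f) < deg(q), ν(f) is torsion over νK. Then ν equals its truncation ν_q, i.e., for every f ∈ K[x] with q-expansion f = f_0 + f_1 q + ... + f_s q^s (deg f_i < deg q), we have ν(f) = min_{0≤i≤s} ν(f_i q^i). -/
open Polynomial

variable {K : Type*} [Field K] {Γ : Type*} [AddCommGroup Γ] [LinearOrder Γ] [IsOrderedAddMonoid Γ]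

/-- The `i`-th coefficient of the `q`-expansion of `f`. -/
noncomputable def qCoeff (q f : Polynomial K) (i : ℕ) : Polynomial K :=
  f / q ^ i % q

/-- The truncation `ν_q` of `w` at `q` :
`ν_q(f) = min_i ν(f_i q^i)` over the `q`-expansion `f = Σ f_i q^i`. -/
noncomputable def trunc (w : Polynomial K → WithTop Γ) (q f : Polynomial K) : WithTop Γ :=
  (Finset.range (f.natDegree + 1)).inf fun i => w (qCoeff q f i * q ^ i)

private lemma coe_nsmul' (n : ℕ) (a : Γ) : (n • (a : WithTop Γ)) = ↑(n • a) := by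
  induction n with
  | zero => simp
  | succ k ih => rw [succ_nsmul, succ_nsmul, ih, WithTop.coe_add]

private lemma pdiv_unique {q d r f : Polynomial K} (hq : q ≠ 0) (h : f = q * d + r)
    (hr : r.degree < q.degree) : f / q = d := by
  by_contra hne
  have hdm := EuclideanDomain.div_add_mod f q
  have hmod : (f % q).degree < q.degree := EuclideanDomain.mod_lt f hq
  have key : q * (f / q - d) = r - f % q := by
    have h2 : q * (f / q) + f % q = q * d + r := by rw [hdm, h]
    ring_nf
    linear_combination h2
  have h1 : (q * (f / q - d)).degree < q.degree := by
    rw [key]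
    calc (r - f % q).degree ≤ max r.degree (f % q).degree := degree_sub_le _ _
      _ < q.degree := max_lt hr hmod
  have h2 : q.degree ≤ (q * (f / q - d)).degree := by
    rw [degree_mul]
    have hs : f / q - d ≠ 0 := sub_ne_zero.mpr hne
    calc q.degree = q.degree + 0 := by simp
      _ ≤ q.degree + (f / q - d).degree := add_le_add_right (zero_le_degree_iff.mpr hs) _
  exact absurd h1 (not_lt_of_ge h2)

private lemma div_pow_succ (q f : Polynomial K) (hq : 0 < q.natDegree) (i : ℕ) :
    f / q ^ (i + 1) = f / q / q ^ i := by
  have hq0 : q ≠ 0 := fun h => by simp [h] at hq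
  have hqi : q ^ i ≠ (0 : Polynomial K) := pow_ne_zero _ hq0
  have hqi1 : q ^ (i + 1) ≠ (0 : Polynomial K) := pow_ne_zero _ hq0
  apply pdiv_unique hqi1 (r := q * (f / q % q ^ i) + f % q)
  · have e1 := EuclideanDomain.div_add_mod f q
    have e2 := EuclideanDomain.div_add_mod (f / q) (q ^ i)
    calc f = q * (f / q) + f % q := e1.symm
      _ = q * (q ^ i * (f / q / q ^ i) + f / q % q ^ i) + f % q := by rw [e2]
      _ = q ^ (i + 1) * (f / q / q ^ i) + (q * (f / q % q ^ i) + f % q) := by ring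
  · have hdq : (0 : WithBot ℕ) ≤ (q ^ i).degree := zero_le_degree_iff.mpr hqi
    have hdeg1 : (q ^ (i + 1)).degree = q.degree + (q ^ i).degree := by
      rw [pow_succ, degree_mul, add_comm]
    have hb1 : (q * (f / q % q ^ i)).degree < (q ^ (i + 1)).degree := by
      rcases eq_or_ne (f / q % q ^ i) 0 with h | h
      · rw [h, mul_zero, degree_zero]
        exact WithBot.bot_lt_iff_ne_bot.mpr fun hb => hqi1 (degree_eq_bot.mp hb)
      · rw [degree_mul, hdeg1]
        exact WithBot.add_lt_add_left (by simp [degree_eq_bot, hq0]) (EuclideanDomain.mod_lt _ hqi)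
    have hb2 : (f % q).degree < (q ^ (i + 1)).degree := by
      calc (f % q).degree < q.degree := EuclideanDomain.mod_lt _ hq0
        _ ≤ (q ^ (i + 1)).degree := by rw [hdeg1]; exact le_add_of_nonneg_right hdq
    calc (q * (f / q % q ^ i) + f % q).degree
        ≤ max (q * (f / q % q ^ i)).degree (f % q).degree := degree_add_le _ _
      _ < (q ^ (i + 1)).degree := max_lt hb1 hb2

private lemma qCoeff_sum (q : Polynomial K) (hq : 0 < q.natDegree) :
    ∀ N (f : Polynomial K), f.natDegree < N →
      ∑ i ∈ Finset.range N, qCoeff q f i * q ^ i = f := by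
  intro N
  induction N with
  | zero => intro f h; omega
  | succ N ih =>
    intro f hf
    have hq0 : q ≠ 0 := fun h => by simp [h] at hq
    rw [Finset.sum_range_succ']
    have h0 : qCoeff q f 0 * q ^ 0 = f % q := by
      simp [qCoeff, EuclideanDomain.div_one]
    have hstep : ∀ i, qCoeff q f (i + 1) = qCoeff q (f / q) i := by
      intro i; unfold qCoeff; rw [div_pow_succ q f hq]
    have hsum : ∑ i ∈ Finset.range N, qCoeff q f (i + 1) * q ^ (i + 1)
        = (∑ i ∈ Finset.range N, qCoeff q (f / q) i * q ^ i) * q := by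
      rw [Finset.sum_mul]
      exact Finset.sum_congr rfl fun i _ => by rw [hstep, pow_succ, mul_assoc]
    rw [hsum, h0]
    rcases eq_or_ne (f / q) 0 with h | h
    · have : ∀ i ∈ Finset.range N, qCoeff q (f / q) i * q ^ i = 0 := by
        intro i _
        simp [qCoeff, h, EuclideanDomain.zero_div]
      rw [Finset.sum_eq_zero this, zero_mul, zero_add]
      have := EuclideanDomain.div_add_mod f q
      rw [h, mul_zero, zero_add] at this
      exact this
    · have hf0 : f ≠ 0 := fun h0 => h (by simp [h0, EuclideanDomain.zero_div])
      have hdlt : (f / q).natDegree < N := by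
        have := natDegree_lt_natDegree (p := f / q) (fun hc => h hc)
          (degree_div_lt hf0 (natDegree_pos_iff_degree_pos.mp hq))
        omega
      rw [ih (f / q) hdlt]
      have := EuclideanDomain.div_add_mod f q
      rw [mul_comm] at this
      exact this

private lemma qCoeff_natDegree_lt (q f : Polynomial K) (hq : 0 < q.natDegree) (i : ℕ) :
    (qCoeff q f i).natDegree < q.natDegree :=
  natDegree_mod_lt _ hq.ne'

private lemma distinct_val (ν : AddValuation (Polynomial K) (WithTop Γ)) (q : Polynomial K)
    (htf : ∀ n : ℕ, 0 < n → ∀ c : K, c ≠ 0 → n • ν q ≠ ν (C c))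
    (htor : ∀ f : Polynomial K, f ≠ 0 → f.natDegree < q.natDegree →
      ∃ n : ℕ, 0 < n ∧ ∃ c : K, c ≠ 0 ∧ n • ν f = ν (C c))
    {a b : Polynomial K} (ha : a ≠ 0) (hda : a.natDegree < q.natDegree)
    (hb : b ≠ 0) (hdb : b.natDegree < q.natDegree)
    {i j : ℕ} (hij : i < j)
    (hfin : ν (a * q ^ i) ≠ ⊤)
    (heq : ν (a * q ^ i) = ν (b * q ^ j)) : False := by
  simp only [ν.map_mul, ν.map_pow] at hfin heq
  have hfa : ν a ≠ ⊤ := (WithTop.add_ne_top.mp hfin).1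
  have hfin' : ν b + j • ν q ≠ ⊤ := by rw [← heq]; exact hfin
  have hfb : ν b ≠ ⊤ := (WithTop.add_ne_top.mp hfin').1
  have hfsj : j • ν q ≠ ⊤ := (WithTop.add_ne_top.mp hfin').2
  have hfq : ν q ≠ ⊤ := by
    intro h
    obtain ⟨j', rfl⟩ : ∃ j', j = j' + 1 := ⟨j - 1, by omega⟩
    rw [succ_nsmul, h, add_top] at hfsj
    exact hfsj rfl
  obtain ⟨γa, hγa⟩ := WithTop.ne_top_iff_exists.mp hfa
  obtain ⟨γb, hγb⟩ := WithTop.ne_top_iff_exists.mp hfb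
  obtain ⟨γq, hγq⟩ := WithTop.ne_top_iff_exists.mp hfq
  have heqΓ : γa + i • γq = γb + j • γq := by
    have : ((γa + i • γq : Γ) : WithTop Γ) = ((γb + j • γq : Γ) : WithTop Γ) := by
      rw [WithTop.coe_add, WithTop.coe_add, ← coe_nsmul', ← coe_nsmul', hγa, hγb, hγq]
      exact heq
    exact_mod_cast this
  obtain ⟨na, hna, ca, hca, hνa⟩ := htor a ha hda
  obtain ⟨nb, hnb, cb, hcb, hνb⟩ := htor b hb hdb
  have hCa : ν (C ca) = ((na • γa : Γ) : WithTop Γ) := by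
    rw [← hνa, ← hγa, coe_nsmul']
  have hCb : ν (C cb) = ((nb • γb : Γ) : WithTop Γ) := by
    rw [← hνb, ← hγb, coe_nsmul']
  -- the constant witnessing torsion of ν q
  set c : K := ca ^ nb * (cb ^ na)⁻¹ with hc
  have hcb' : cb ^ na ≠ 0 := pow_ne_zero _ hcb
  have hcne : c ≠ 0 := mul_ne_zero (pow_ne_zero _ hca) (inv_ne_zero hcb')
  have hmul : ν (C c) + ν (C (cb ^ na)) = ν (C (ca ^ nb)) := by
    rw [← ν.map_mul, ← C_mul, hc, mul_assoc, inv_mul_cancel₀ hcb', mul_one]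
  have hCan : ν (C (ca ^ nb)) = ((nb • (na • γa) : Γ) : WithTop Γ) := by
    rw [C_pow, ν.map_pow, hCa, coe_nsmul']
  have hCbn : ν (C (cb ^ na)) = ((na • (nb • γb) : Γ) : WithTop Γ) := by
    rw [C_pow, ν.map_pow, hCb, coe_nsmul']
  have hCc : ν (C c) = ((nb • (na • γa) - na • (nb • γb) : Γ) : WithTop Γ) := by
    rw [hCbn, hCan] at hmul
    have hcc : ν (C c) ≠ ⊤ := by
      intro h; rw [h, top_add] at hmul; exact (WithTop.coe_ne_top hmul.symm)
    obtain ⟨e, he⟩ := WithTop.ne_top_iff_exists.mp hcc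
    rw [← he, ← WithTop.coe_add] at hmul
    have : e + na • (nb • γb) = nb • (na • γa) := by exact_mod_cast hmul
    rw [← he]
    congr 1
    rw [← this]; abel
  have h1 : (j - i) • γq = γa - γb := by
    have h2 : γa + i • γq = (γb + (j - i) • γq) + i • γq := by
      rw [add_assoc, ← add_nsmul, Nat.sub_add_cancel hij.le]
      exact heqΓ
    have h3 := add_right_cancel h2
    rw [h3]; abel
  set N : ℕ := na * nb * (j - i) with hN
  have hNpos : 0 < N := Nat.mul_pos (Nat.mul_pos hna hnb) (Nat.sub_pos_of_lt hij)
  have hfinal : N • γq = nb • (na • γa) - na • (nb • γb) := by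
    calc N • γq = (na * nb) • ((j - i) • γq) := by rw [hN, mul_smul]
      _ = (na * nb) • (γa - γb) := by rw [h1]
      _ = nb • (na • γa) - na • (nb • γb) := by
          rw [smul_sub, smul_smul, smul_smul, mul_comm nb na]
  apply htf N hNpos c hcne
  rw [← hγq, coe_nsmul', hfinal, hCc]

/-- `b` is an admissible index in the definition of `ε(f)`. -/
def ValidIdx (w : Polynomial K → WithTop Γ) (f : Polynomial K) (b : ℕ) : Prop :=
  1 ≤ b ∧ b ≤ f.natDegree ∧ w f ≠ ⊤ ∧ w (Polynomial.hasseDeriv b f) ≠ ⊤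

/-- `(w(g) - w(∂_c g))/c ≤ (w(f) - w(∂_b f))/b`, written multiplicatively
(cross-multiplied) to stay inside `WithTop Γ`. -/
def RatioLE (w : Polynomial K → WithTop Γ) (g : Polynomial K) (c : ℕ)
    (f : Polynomial K) (b : ℕ) : Prop :=
  b • w g + c • w (Polynomial.hasseDeriv b f) ≤ c • w f + b • w (Polynomial.hasseDeriv c g)

/-- `f` is a generator of the support of `w`. -/
def IsGenSupp (w : Polynomial K → WithTop Γ) (f : Polynomial K) : Prop :=
  ∀ g, w g = ⊤ ↔ f ∣ g

/-- `ε(f) ≥ ε(Q)` (for the valuation `w`), taking the conventions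
`ε(f) = -∞` if `deg f = 0` (more generally, if the defining set is empty) and
`ε(f) = ∞` if `f` generates the support of `w`. -/
def EpsGE (w : Polynomial K → WithTop Γ) (f Q : Polynomial K) : Prop :=
  IsGenSupp w f ∨
    (¬ IsGenSupp w Q ∧
      ((∀ c, ¬ ValidIdx w Q c) ∨
        ∃ b, ValidIdx w f b ∧ ∀ c, ValidIdx w Q c → RatioLE w Q c f b))

/-- `Q` is a key polynomial for `w` : `Q` is monic and
`ε(f) ≥ ε(Q)` implies `deg f ≥ deg Q`. -/
def IsKeyPoly (w : Polynomial K → WithTop Γ) (Q : Polynomial K) : Prop :=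
  Q.Monic ∧ ∀ f : Polynomial K, f ≠ 0 → EpsGE w f Q → Q.natDegree ≤ f.natDegree

/-- If `ν(q)` is torsion-free over `νK` while every polynomial of degree
smaller than `deg q` has value torsion over `νK`, then `ν` equals its truncation `ν_q`. -/
theorem stmt0 (ν : AddValuation (Polynomial K) (WithTop Γ)) (q : Polynomial K)
    (hq : 0 < q.natDegree)
    (htf : ∀ n : ℕ, 0 < n → ∀ c : K, c ≠ 0 → n • ν q ≠ ν (C c))
    (htor : ∀ f : Polynomial K, f ≠ 0 → f.natDegree < q.natDegree →
      ∃ n : ℕ, 0 < n ∧ ∃ c : K, c ≠ 0 ∧ n • ν f = ν (C c)) :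
    ∀ f : Polynomial K, ν f = trunc (⇑ν) q f := by
  intro f
  have hdecomp : ∑ i ∈ Finset.range (f.natDegree + 1), qCoeff q f i * q ^ i = f :=
    qCoeff_sum q hq (f.natDegree + 1) f (Nat.lt_succ_self _)
  have hge : trunc (⇑ν) q f ≤ ν f := by
    conv_rhs => rw [← hdecomp]
    exact ν.map_le_sum fun i hi => Finset.inf_le hi
  rcases eq_or_ne (trunc (⇑ν) q f) ⊤ with htop | hlt
  · rw [htop] at hge ⊢
    exact top_unique hge
  · obtain ⟨i₀, hi₀mem, hinf⟩ := Finset.exists_mem_eq_inf (Finset.range (f.natDegree + 1))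
      ⟨0, Finset.mem_range.mpr (Nat.succ_pos _)⟩ (fun i => ν (qCoeff q f i * q ^ i))
    have htr : trunc (⇑ν) q f = ν (qCoeff q f i₀ * q ^ i₀) := hinf
    have hfin : ν (qCoeff q f i₀ * q ^ i₀) ≠ ⊤ := htr ▸ hlt
    have hc0 : qCoeff q f i₀ ≠ 0 := by
      intro h
      apply hfin
      rw [h, zero_mul]
      exact ν.map_zero
    have hrest : ν (qCoeff q f i₀ * q ^ i₀) <
        ν (∑ i ∈ (Finset.range (f.natDegree + 1)).erase i₀, qCoeff q f i * q ^ i) := by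
      apply ν.map_lt_sum' (lt_top_iff_ne_top.mpr hfin)
      intro i hi
      have himem := Finset.mem_of_mem_erase hi
      have hne : i ≠ i₀ := Finset.ne_of_mem_erase hi
      have hle : ν (qCoeff q f i₀ * q ^ i₀) ≤ ν (qCoeff q f i * q ^ i) :=
        htr ▸ Finset.inf_le himem
      rcases eq_or_ne (qCoeff q f i) 0 with h | h
      · rw [h, zero_mul, ν.map_zero]
        exact lt_top_iff_ne_top.mpr hfin
      · apply lt_of_le_of_ne hle
        intro heqv
        rcases hne.lt_or_gt with hlt' | hlt'
        · exact distinct_val ν q htf htor h (qCoeff_natDegree_lt q f hq i)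
            hc0 (qCoeff_natDegree_lt q f hq i₀) hlt' (heqv ▸ hfin) heqv.symm
        · exact distinct_val ν q htf htor hc0 (qCoeff_natDegree_lt q f hq i₀)
            h (qCoeff_natDegree_lt q f hq i) hlt' hfin heqv
    have hsplit : qCoeff q f i₀ * q ^ i₀ +
        ∑ i ∈ (Finset.range (f.natDegree + 1)).erase i₀, qCoeff q f i * q ^ i = f :=
      (Finset.add_sum_erase _ (fun i => qCoeff q f i * q ^ i) hi₀mem).trans hdecomp
    have hνf : ν f = ν (qCoeff q f i₀ * q ^ i₀) := by
      conv_lhs => rw [← hsplit]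
      exact ν.map_add_eq_of_lt_left hrest
    rw [hνf, htr]
end

section
/- Let μ be a valuation on K̄[x] with K̄ algebraically closed, a ∈ K̄, and δ = μ(x−a). Then the pair (a, δ) is a pair of definition for μ (i.e., μ equals the monomial valuation μ_{a,δ}) if and only if μ(x−a) ≥ μ(x−c) for every c ∈ K̄. -/
open Polynomial

variable {K : Type*} [Field K] {Γ : Type*} [AddCommGroup Γ] [LinearOrder Γ] [IsOrderedAddMonoid Γ]

lemma taylor_expansion (a : K) (f : Polynomial K) :
    f = ∑ j ∈ Finset.range (f.natDegree + 1), C ((taylor a f).coeff j) * (X - C a) ^ j := by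
  have h := Polynomial.sum_taylor_eq f a
  have h2 := Polynomial.sum_over_range (p := taylor a f)
    (f := fun j c => C c * (X - C a) ^ j) (by simp)
  rw [h2, natDegree_taylor] at h
  exact h.symm

/-- `qCoeff (X - C a) f i` is the `i`-th Taylor coefficient of `f` at `a`. -/
lemma qCoeff_X_sub_C (a : K) (f : Polynomial K) (i : ℕ) :
    qCoeff (X - C a) f i = C ((taylor a f).coeff i) := by
  set q : Polynomial K := X - C a with hq
  have hmq : q.Monic := monic_X_sub_C a
  have hdq : q.degree = 1 := by rw [hq]; exact degree_X_sub_C a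
  set n := f.natDegree with hn
  set T := taylor a f with hT
  have hTd : T.natDegree = n := natDegree_taylor f a
  have hf : f = ∑ j ∈ Finset.range (n + 1), C (T.coeff j) * q ^ j := taylor_expansion a f
  -- extended expansion
  have hf2 : f = ∑ j ∈ Finset.range (i + (n + 1)), C (T.coeff j) * q ^ j := by
    rw [hf]
    apply Finset.sum_subset (Finset.range_subset_range.2 (by omega))
    intro j _ hj
    have : T.coeff j = 0 := by
      apply coeff_eq_zero_of_natDegree_lt
      rw [hTd]
      simp only [Finset.mem_range] at hj ⊢
      omega
    simp [this]
  set D : Polynomial K := ∑ j ∈ Finset.range (n + 1), C (T.coeff (i + j)) * q ^ j with hD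
  set R : Polynomial K := ∑ j ∈ Finset.range i, C (T.coeff j) * q ^ j with hR
  have hsplit : f = R + q ^ i * D := by
    rw [hf2, Finset.sum_range_add, hD, hR, Finset.mul_sum]
    congr 1
    apply Finset.sum_congr rfl
    intro j _
    rw [pow_add]
    ring
  have hdegR : R.degree < (q ^ i).degree := by
    have hdqi : (q ^ i).degree = (i : WithBot ℕ) := by
      rw [degree_pow, hdq]; simp
    rw [hdqi, hR]
    apply lt_of_le_of_lt (degree_sum_le _ _)
    rw [Finset.sup_lt_iff (by exact_mod_cast WithBot.bot_lt_coe i)]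
    intro j hj
    have hji : (j : WithBot ℕ) < (i : WithBot ℕ) := by
      exact_mod_cast Finset.mem_range.1 hj
    refine lt_of_le_of_lt ?_ hji
    calc (C (T.coeff j) * q ^ j).degree ≤ (C (T.coeff j)).degree + (q ^ j).degree :=
          degree_mul_le _ _
      _ ≤ 0 + (j : WithBot ℕ) :=
          add_le_add degree_C_le (by rw [degree_pow, hdq]; simp)
      _ = (j : WithBot ℕ) := zero_add _
  have hdiv : f /ₘ q ^ i = D :=
    (Polynomial.div_modByMonic_unique D R (hmq.pow i) ⟨hsplit.symm, hdegR⟩).1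
  set E : Polynomial K := ∑ j ∈ Finset.range n, C (T.coeff (i + (j + 1))) * q ^ j with hE
  have hDsplit : D = C (T.coeff i) + q * E := by
    rw [hD, Finset.sum_range_succ', hE, Finset.mul_sum]
    simp only [pow_zero, mul_one, add_zero]
    rw [add_comm]
    congr 1
    apply Finset.sum_congr rfl
    intro j _
    rw [pow_succ]
    ring
  have hmod : D %ₘ q = C (T.coeff i) :=
    (Polynomial.div_modByMonic_unique E (C (T.coeff i)) hmq
      ⟨hDsplit.symm, lt_of_le_of_lt degree_C_le (by rw [hdq]; exact zero_lt_one)⟩).2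
  rw [qCoeff, ← Polynomial.divByMonic_eq_div f (hmq.pow i),
    ← Polynomial.modByMonic_eq_mod _ hmq, hdiv, hmod]

/-- the `(X - C a)`-expansion of `f`. -/
lemma expansion_eq (a : K) (f : Polynomial K) :
    ∑ i ∈ Finset.range (f.natDegree + 1), qCoeff (X - C a) f i * (X - C a) ^ i = f := by
  conv_rhs => rw [taylor_expansion a f]
  exact Finset.sum_congr rfl fun i _ => by rw [qCoeff_X_sub_C]

section Val

variable (μ : AddValuation (Polynomial K) (WithTop Γ))

lemma val_multiset_prod (m : Multiset (Polynomial K)) :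
    μ m.prod = (m.map fun x => μ x).sum := by
  induction m using Multiset.induction with
  | empty => simpa using μ.map_one
  | cons b s ih => simp [Multiset.prod_cons, μ.map_mul, ih]

lemma le_val_multiset_sum_add {g c : WithTop Γ} (m : Multiset (Polynomial K))
    (h : ∀ x ∈ m, g ≤ μ x + c) : g ≤ μ m.sum + c := by
  induction m using Multiset.induction with
  | empty =>
    simp [μ.map_zero]
  | cons b s ih =>
    rw [Multiset.sum_cons]
    have h1 : g ≤ μ b + c := h b (Multiset.mem_cons_self b s)
    have h2 : g ≤ μ s.sum + c := ih fun x hx => h x (Multiset.mem_cons_of_mem hx)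
    have h3 : min (μ b) (μ s.sum) + c ≤ μ (b + s.sum) + c :=
      add_le_add_left (μ.map_add b s.sum) c
    refine le_trans ?_ h3
    rw [← min_add_add_right]
    exact le_min h1 h2

/-- the valuation of each root factor. -/
lemma val_root_factor (a : K) (H : ∀ c : K, μ (X - C c) ≤ μ (X - C a)) (r : K) :
    μ (X - C r) = min (μ (X - C a)) (μ (C (a - r))) := by
  have hle : μ (X - C r) ≤ μ (X - C a) := H r
  have hC : (C (a - r) : Polynomial K) = (X - C r) - (X - C a) := by
    rw [C_sub]; ring
  have h1 : μ (X - C r) ≤ μ (C (a - r)) := by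
    rw [hC, sub_eq_add_neg]
    refine le_trans ?_ (μ.map_add _ _)
    rw [μ.map_neg]
    exact le_min le_rfl hle
  have h2 : min (μ (X - C a)) (μ (C (a - r))) ≤ μ (X - C r) := by
    have : (X - C r : Polynomial K) = (X - C a) + C (a - r) := by
      rw [C_sub]; ring
    rw [this]
    exact μ.map_add _ _
  exact le_antisymm (le_min hle h1) h2

/-- the key upper bound : `μ p ≤ μ (C t_i) + i • μ (X - C a)` for `i ≤ deg p`. -/
lemma val_le_term (a : K) [IsAlgClosed K] (H : ∀ c : K, μ (X - C c) ≤ μ (X - C a))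
    (p : Polynomial K) (hp : p ≠ 0) {i : ℕ} (hi : i ≤ p.natDegree) :
    μ p ≤ μ (C ((taylor a p).coeff i)) + i • μ (X - C a) := by
  classical
  set δ := μ (X - C a) with hδ
  set n := p.natDegree with hn
  have hsplits : Splits p := IsAlgClosed.splits p
  set s := p.roots with hs
  have hcard : Multiset.card s = n := Polynomial.splits_iff_card_roots.1 hsplits
  have hfac : p = C p.leadingCoeff * (s.map fun r => X - C r).prod :=
    hsplits.eq_prod_roots
  set u : Multiset K := s.map fun r => a - r with hu
  have hucard : Multiset.card u = n := by rw [hu, Multiset.card_map, hcard]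
  -- the Taylor coefficient as an elementary symmetric function
  have htay : (taylor a p).coeff i = p.leadingCoeff * u.esymm (n - i) := by
    have h1 : taylor a p = C p.leadingCoeff * (u.map fun t => X + C t).prod := by
      conv_lhs => rw [hfac]
      rw [taylor_apply, mul_comp, C_comp, Polynomial.multiset_prod_comp, hu,
        Multiset.map_map, Multiset.map_map]
      congr 1
      congr 1
      apply Multiset.map_congr rfl
      intro r _
      simp only [Function.comp_apply, sub_comp, X_comp, C_comp, C_sub]
      ring
    rw [h1, coeff_C_mul, Multiset.prod_X_add_C_coeff u (by omega), hucard]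
  -- value of p via its roots
  have hvp : μ p = μ (C p.leadingCoeff) + (u.map fun t => min δ (μ (C t))).sum := by
    conv_lhs => rw [hfac]
    rw [μ.map_mul, val_multiset_prod, Multiset.map_map, hu, Multiset.map_map]
    congr 1
    congr 1
    apply Multiset.map_congr rfl
    intro r _
    simp only [Function.comp_apply]
    exact val_root_factor μ a H r
  -- value of the term
  have hvt : μ (C ((taylor a p).coeff i)) + i • δ
      = μ (C p.leadingCoeff) + (μ (C (u.esymm (n - i))) + i • δ) := by
    rw [htay, C_mul, μ.map_mul, add_assoc]
  rw [hvp, hvt]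
  apply add_le_add_right
  -- esymm as a multiset sum
  have hesymm : (C (u.esymm (n - i)) : Polynomial K)
      = (((u.powersetCard (n - i)).map Multiset.prod).map fun t => C t).sum := by
    rw [Multiset.esymm, map_multiset_sum]
  have hbound : ∀ P ∈ u.powersetCard (n - i),
      (u.map fun t => min δ (μ (C t))).sum ≤ μ (C P.prod) + i • δ := by
    intro P hP
    rw [Multiset.mem_powersetCard] at hP
    obtain ⟨hPle, hPcard⟩ := hP
  -- split u into P and u - P
    have husplit : u = P + (u - P) := (tsub_add_cancel_of_le hPle).symm.trans (add_comm _ _)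
    have hcard2 : Multiset.card (u - P) = i := by
      rw [Multiset.card_sub hPle, hPcard, hucard]
      omega
    have hCP : μ (C P.prod) = (P.map fun t => μ (C t)).sum := by
      rw [map_multiset_prod (C : K →+* Polynomial K) P, val_multiset_prod, Multiset.map_map]
      rfl
    rw [hCP]
    calc (u.map fun t => min δ (μ (C t))).sum
        = (P.map fun t => min δ (μ (C t))).sum + ((u - P).map fun t => min δ (μ (C t))).sum := by
          conv_lhs => rw [husplit]
          rw [Multiset.map_add, Multiset.sum_add]
      _ ≤ (P.map fun t => μ (C t)).sum + ((u - P).map fun _ => δ).sum := by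
          apply add_le_add
          · exact Multiset.sum_map_le_sum_map _ _ fun t _ => min_le_right _ _
          · exact Multiset.sum_map_le_sum_map _ _ fun t _ => min_le_left _ _
      _ = (P.map fun t => μ (C t)).sum + i • δ := by
          rw [Multiset.map_const', Multiset.sum_replicate, hcard2]
  rw [hesymm]
  apply le_val_multiset_sum_add
  intro x hx
  rw [Multiset.mem_map] at hx
  obtain ⟨y, hy, rfl⟩ := hx
  rw [Multiset.mem_map] at hy
  obtain ⟨P, hP, rfl⟩ := hy
  exact hbound P hP

end Val

/-- `(a, μ(x-a))` is a pair of definition for `μ` (i.e. `μ` equals the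
monomial/truncation valuation `μ_{x-a}`) iff `μ(x-a) ≥ μ(x-c)` for every `c`. -/
theorem stmt2 [IsAlgClosed K] (μ : AddValuation (Polynomial K) (WithTop Γ)) (a : K) :
    (∀ p : Polynomial K, trunc (⇑μ) (X - C a) p = μ p) ↔
      ∀ c : K, μ (X - C c) ≤ μ (X - C a) := by
  constructor
  · intro H c
    have h1 := H (X - C c)
    have h2 : trunc (⇑μ) (X - C a) (X - C c)
        ≤ μ (qCoeff (X - C a) (X - C c) 1 * (X - C a) ^ 1) := by
      apply Finset.inf_le
      rw [natDegree_X_sub_C]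
      simp
    rw [h1] at h2
    refine h2.trans (le_of_eq ?_)
    rw [qCoeff_X_sub_C]
    have ht : taylor a (X - C c) = X + C (a - c) := by
      rw [map_sub, taylor_X, taylor_C, C_sub]
      ring
    have hc1 : (taylor a (X - C c)).coeff 1 = 1 := by
      rw [ht]
      simp [coeff_add, coeff_X_one, coeff_C]
    rw [hc1]
    simp
  · intro H p
    by_cases hp : p = 0
    · subst hp
      have hq0 : ∀ i, qCoeff (X - C a) (0 : Polynomial K) i = 0 := by
        intro i
        rw [qCoeff_X_sub_C]
        simp
      simp [trunc, hq0, μ.map_zero]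
    · apply le_antisymm
      · conv_rhs => rw [← expansion_eq a p]
        apply μ.map_le_sum
        intro i hi
        exact Finset.inf_le hi
      · apply Finset.le_inf
        intro i hi
        rw [Finset.mem_range] at hi
        rw [qCoeff_X_sub_C]
        refine (val_le_term μ a H p hp (by omega : i ≤ p.natDegree)).trans (le_of_eq ?_)
        rw [μ.map_mul, μ.map_pow]
end

section
/- Let μ be a valuation on K̄[x] extending a Krull valuation ν on K[x], and let (a,γ) be a minimal pair for μ with γ = μ(x−a). Then for every f ∈ K[x] with deg(f) < [K(a):K], the maximum δ(f) of μ(x−b) over all roots b ∈ K̄ of f satisfies δ(f) < γ. -/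
open Polynomial

variable {K : Type*} [Field K] {Γ : Type*} [AddCommGroup Γ] [LinearOrder Γ] [IsOrderedAddMonoid Γ]

/-- If `(a, γ)` is a minimal pair for `μ` with `γ = μ(x-a)`, then every
`f ∈ K[x]` with `deg f < [K(a):K]` satisfies `δ(f) < γ`, i.e. `μ(x-b) < γ` for every
root `b` of `f`. -/
theorem stmt5 {L : Type*} [Field L] [Algebra K L] [IsAlgClosure K L]
    (ν : AddValuation (Polynomial K) (WithTop Γ)) (μ : AddValuation (Polynomial L) (WithTop Γ))
    (hKrull : ∀ p : Polynomial K, p ≠ 0 → ν p ≠ ⊤)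
    (hext : ∀ p : Polynomial K, ν p = μ (p.map (algebraMap K L)))
    (a : L) (γ : WithTop Γ) (hγ : γ = μ (X - C a))
    (hmin : ∀ b : L, γ ≤ μ (C b - C a) →
      (minpoly K a).natDegree ≤ (minpoly K b).natDegree)
    (f : Polynomial K) (hf0 : 0 < f.natDegree)
    (hdeg : f.natDegree < (minpoly K a).natDegree) :
    ∀ b : L, Polynomial.aeval b f = 0 → μ (X - C b) < γ := by
  intro b hb
  by_contra h
  push_neg at h
  have hba : γ ≤ μ (C b - C a) := by
    have : C b - C a = (X - C a) - (X - C b) := by ring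
    rw [this]
    refine le_trans ?_ (μ.map_sub _ _)
    simp only [le_min_iff]
    exact ⟨hγ.le, h⟩
  have h1 := hmin b hba
  have hf : f ≠ 0 := fun h0 => by simp [h0] at hf0
  have hd : minpoly K b ∣ f := minpoly.dvd K b hb
  have h2 : (minpoly K b).natDegree ≤ f.natDegree :=
    Polynomial.natDegree_le_of_dvd hd hf
  omega
end

section
/- Let μ be a valuation on K̄[x] (K̄ algebraically closed), f ∈ K̄[x] non-constant with an optimizing root a (i.e., μ(x−a) = δ(f) = max over roots b of f of μ(x−b)). If g ∈ K̄[x] satisfies δ(g) < δ(f), then μ_{x−a}(g) = μ(g) = μ(g(a)), and the residue of g/g(a) under μ_{x−a} equals 1. -/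
open Polynomial

variable {K : Type*} [Field K] {Γ : Type*} [AddCommGroup Γ] [LinearOrder Γ] [IsOrderedAddMonoid Γ]

section Stmt6Aux

lemma qCoeff_X_sub_C_eq (a : K) (p : Polynomial K) (i : ℕ) :
    qCoeff (X - C a) p i = C ((p /ₘ (X - C a) ^ i).eval a) := by
  rw [qCoeff, ← divByMonic_eq_div _ ((monic_X_sub_C a).pow i), mod_X_sub_C_eq_C_eval]

lemma my_divByMonic_add (p r m : Polynomial K) (hm : m.Monic) :
    (p + r) /ₘ m = p /ₘ m + r /ₘ m := by
  refine (div_modByMonic_unique _ (p %ₘ m + r %ₘ m) hm ⟨?_, ?_⟩).1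
  · have h1 := modByMonic_add_div p m
    have h2 := modByMonic_add_div r m
    linear_combination h1 + h2
  · exact lt_of_le_of_lt (degree_add_le _ _)
      (max_lt (degree_modByMonic_lt p hm) (degree_modByMonic_lt r hm))

lemma my_divByMonic_C_mul (c : K) (p m : Polynomial K) (hm : m.Monic) :
    (C c * p) /ₘ m = C c * (p /ₘ m) := by
  refine (div_modByMonic_unique _ (C c * (p %ₘ m)) hm ⟨?_, ?_⟩).1
  · have h1 := modByMonic_add_div p m
    linear_combination C c * h1
  · refine lt_of_le_of_lt ?_ (degree_modByMonic_lt p hm)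
    simpa [smul_eq_C_mul] using degree_smul_le c (p %ₘ m)

lemma degree_X_sub_C_pow (a : K) (i : ℕ) : ((X - C a) ^ i).degree = (i : WithBot ℕ) := by
  rw [degree_pow, degree_X_sub_C]
  simp

lemma my_X_sub_C_mul_divByMonic (a : K) (h : Polynomial K) (i : ℕ) :
    ((X - C a) * h) /ₘ (X - C a) ^ (i + 1) = h /ₘ (X - C a) ^ i := by
  refine (div_modByMonic_unique _ ((X - C a) * (h %ₘ (X - C a) ^ i))
    ((monic_X_sub_C a).pow (i + 1)) ⟨?_, ?_⟩).1
  · have h1 := modByMonic_add_div h ((X - C a) ^ i)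
    linear_combination (X - C a) * h1
  · rcases eq_or_ne (h %ₘ (X - C a) ^ i) 0 with h0 | h0
    · rw [h0, mul_zero, degree_zero, degree_X_sub_C_pow]
      exact WithBot.bot_lt_coe _
    · have hr := degree_modByMonic_lt h ((monic_X_sub_C a).pow i)
      rw [degree_X_sub_C_pow] at hr
      rw [degree_mul, degree_X_sub_C, degree_X_sub_C_pow, add_comm]
      refine lt_of_lt_of_le (WithBot.add_lt_add_right (by simp) hr) (le_of_eq ?_)
      push_cast
      ring

lemma addval_C_ne_top (μ : AddValuation (Polynomial K) (WithTop Γ)) {c : K} (hc : c ≠ 0) :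
    μ (C c) ≠ ⊤ := by
  intro h
  have h1 : μ (C c * C c⁻¹) = μ (C c) + μ (C c⁻¹) := μ.map_mul _ _
  rw [← C_mul, mul_inv_cancel₀ hc, C_1, μ.map_one, h, top_add] at h1
  simp at h1

lemma key_lemma [IsAlgClosed K] (μ : AddValuation (Polynomial K) (WithTop Γ)) (a : K) :
    ∀ n (g : Polynomial K), g.natDegree ≤ n → g ≠ 0 →
      (∀ b : K, g.eval b = 0 → μ (X - C b) < μ (X - C a)) →
      μ (C (g.eval a)) = μ g ∧
      ∀ i, μ g ≤ μ (qCoeff (X - C a) g i * (X - C a) ^ i) ∧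
        (1 ≤ i → μ g < μ (qCoeff (X - C a) g i * (X - C a) ^ i)) := by
  intro n
  induction n with
  | zero =>
    intro g hle hg0 hδ
    obtain ⟨c, rfl⟩ := natDegree_eq_zero.mp (Nat.le_zero.mp hle)
    have hc : c ≠ 0 := fun e => hg0 (by rw [e, C_0])
    have hct : μ (C c) ≠ ⊤ := addval_C_ne_top μ hc
    refine ⟨by rw [eval_C], fun i => ?_⟩
    rcases i with _ | j
    · refine ⟨?_, by omega⟩
      rw [qCoeff_X_sub_C_eq, pow_zero, divByMonic_one, eval_C, mul_one]
    · have hdiv : (C c : Polynomial K) /ₘ (X - C a) ^ (j + 1) = 0 := by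
        rw [divByMonic_eq_zero_iff ((monic_X_sub_C a).pow _)]
        refine lt_of_le_of_lt degree_C_le ?_
        rw [degree_X_sub_C_pow]
        exact_mod_cast j.succ_pos
      rw [qCoeff_X_sub_C_eq, hdiv, eval_zero, C_0, zero_mul, μ.map_zero]
      exact ⟨le_top, fun _ => lt_top_iff_ne_top.mpr hct⟩
  | succ n ih =>
    intro g hle hg0 hδ
    rcases Nat.eq_zero_or_pos g.natDegree with hdeg | hdeg
    · exact ih g (by omega) hg0 hδ
    have hdeg' : g.degree ≠ 0 := fun h0 => by
      rw [natDegree_eq_zero_iff_degree_le_zero.mpr h0.le] at hdeg; omega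
    obtain ⟨b, hb⟩ := IsAlgClosed.exists_root g hdeg'
    have hb' : g.eval b = 0 := hb
    set h := g /ₘ (X - C b) with hh
    have hgh : (X - C b) * h = g := mul_divByMonic_eq_iff_isRoot.mpr hb
    have hh0 : h ≠ 0 := by
      intro h0; rw [h0, mul_zero] at hgh; exact hg0 hgh.symm
    have hhn : h.natDegree ≤ n := by
      rw [← hgh, natDegree_mul (X_sub_C_ne_zero b) hh0, natDegree_X_sub_C] at hle
      omega
    have hδh : ∀ b' : K, h.eval b' = 0 → μ (X - C b') < μ (X - C a) := fun b' h' =>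
      hδ b' (by rw [← hgh, eval_mul, h', mul_zero])
    obtain ⟨ihv, ihterm⟩ := ih h hhn hh0 hδh
    have hga : g.eval a ≠ 0 := fun e => lt_irrefl _ (hδ a e)
    have hha : h.eval a ≠ 0 := by
      intro e; apply hga; rw [← hgh, eval_mul, e, mul_zero]
    have hβ : a - b ≠ 0 := by
      intro e
      obtain rfl := sub_eq_zero.mp e
      exact lt_irrefl _ (hδ _ hb')
    have vβ : μ (C (a - b)) = μ (X - C b) := by
      have e : (X - C b) - (X - C a) = C (a - b) := by rw [C_sub]; ring
      rw [← e]
      exact μ.map_sub_eq_of_lt_left (hδ b hb')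
    have vβtop : μ (C (a - b)) ≠ ⊤ := addval_C_ne_top μ hβ
    have hμh : μ h ≠ ⊤ := by rw [← ihv]; exact addval_C_ne_top μ hha
    have hgval : μ g = μ (C (a - b)) + μ h := by
      rw [← hgh, μ.map_mul, vβ]
    have hevala : g.eval a = (a - b) * h.eval a := by
      rw [← hgh, eval_mul, eval_sub, eval_X, eval_C]
    have first : μ (C (g.eval a)) = μ g := by
      rw [hevala, C_mul, μ.map_mul, ihv, hgval]
    refine ⟨first, fun i => ?_⟩
    have vβlt : μ (C (a - b)) < μ (X - C a) := vβ ▸ hδ b hb'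
    rcases i with _ | j
    · refine ⟨?_, by omega⟩
      rw [qCoeff_X_sub_C_eq, pow_zero, divByMonic_one, mul_one, first]
    · have hsplit : g = (X - C a) * h + C (a - b) * h := by
        rw [← hgh, C_sub]; ring
      have hdivg : g /ₘ (X - C a) ^ (j + 1)
          = h /ₘ (X - C a) ^ j + C (a - b) * (h /ₘ (X - C a) ^ (j + 1)) := by
        conv_lhs => rw [hsplit]
        rw [my_divByMonic_add _ _ _ ((monic_X_sub_C a).pow _),
          my_X_sub_C_mul_divByMonic, my_divByMonic_C_mul _ _ _ ((monic_X_sub_C a).pow _)]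
      have hterm_eq : qCoeff (X - C a) g (j + 1) * (X - C a) ^ (j + 1)
          = qCoeff (X - C a) h j * (X - C a) ^ j * (X - C a)
            + C (a - b) * (qCoeff (X - C a) h (j + 1) * (X - C a) ^ (j + 1)) := by
        rw [qCoeff_X_sub_C_eq, qCoeff_X_sub_C_eq, qCoeff_X_sub_C_eq, hdivg]
        rw [eval_add, eval_mul, eval_C, C_add, C_mul]
        ring
      have h1 : μ g < μ (qCoeff (X - C a) h j * (X - C a) ^ j * (X - C a)) := by
        rw [μ.map_mul, hgval, add_comm (μ (C (a - b)))]
        calc μ h + μ (C (a - b)) < μ h + μ (X - C a) :=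
              WithTop.add_lt_add_left hμh vβlt
          _ ≤ μ (qCoeff (X - C a) h j * (X - C a) ^ j) + μ (X - C a) :=
              add_le_add_left (ihterm j).1 _
      have h2 : μ g < μ (C (a - b) * (qCoeff (X - C a) h (j + 1) * (X - C a) ^ (j + 1))) := by
        rw [μ.map_mul, hgval]
        exact WithTop.add_lt_add_left vβtop ((ihterm (j + 1)).2 (by omega))
      have hlt : μ g < μ (qCoeff (X - C a) g (j + 1) * (X - C a) ^ (j + 1)) := by
        rw [hterm_eq]
        exact lt_of_lt_of_le (lt_min h1 h2) (μ.map_add _ _)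
      exact ⟨hlt.le, fun _ => hlt⟩

end Stmt6Aux

/-- If `a` is an optimizing root of `f` and every root of `g` satisfies
`μ(x-b) < δ(f) = μ(x-a)` (i.e. `δ(g) < δ(f)`), then `μ_{x-a}(g) = μ(g) = μ(g(a))` and the
residue of `g/g(a)` under `μ_{x-a}` is `1`. -/
theorem stmt6 [IsAlgClosed K] (μ : AddValuation (Polynomial K) (WithTop Γ))
    (f : Polynomial K) (hf : 0 < f.natDegree) (a : K) (ha : f.eval a = 0)
    (hopt : ∀ b : K, f.eval b = 0 → μ (X - C b) ≤ μ (X - C a))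
    (g : Polynomial K) (hg : g ≠ 0)
    (hδ : ∀ b : K, g.eval b = 0 → μ (X - C b) < μ (X - C a)) :
    trunc (⇑μ) (X - C a) g = μ g ∧ μ g = μ (C (g.eval a)) ∧
      μ (C (g.eval a)) < trunc (⇑μ) (X - C a) (g - C (g.eval a)) := by
  obtain ⟨hval, hterm⟩ := key_lemma μ a g.natDegree g le_rfl hg hδ
  have hga : g.eval a ≠ 0 := fun e => lt_irrefl _ (hδ a e)
  have hgtop : μ g ≠ ⊤ := by rw [← hval]; exact addval_C_ne_top μ hga
  have htr : trunc (⇑μ) (X - C a) g = μ g := by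
    refine le_antisymm ?_ (Finset.le_inf fun i _ => (hterm i).1)
    have h0 : (0 : ℕ) ∈ Finset.range (g.natDegree + 1) := Finset.mem_range.mpr (by omega)
    refine le_trans (Finset.inf_le h0) ?_
    rw [qCoeff_X_sub_C_eq, pow_zero, divByMonic_one, mul_one, hval]
  refine ⟨htr, hval.symm, ?_⟩
  rw [hval, trunc, Finset.lt_inf_iff (lt_top_iff_ne_top.mpr hgtop)]
  intro i _
  rcases i with _ | j
  · rw [qCoeff_X_sub_C_eq, pow_zero, divByMonic_one, mul_one, eval_sub, eval_C, sub_self,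
      C_0, μ.map_zero]
    exact lt_top_iff_ne_top.mpr hgtop
  · have hC : (C (g.eval a) : Polynomial K) /ₘ (X - C a) ^ (j + 1) = 0 := by
      rw [divByMonic_eq_zero_iff ((monic_X_sub_C a).pow _)]
      refine lt_of_le_of_lt degree_C_le ?_
      rw [degree_X_sub_C_pow]
      exact_mod_cast j.succ_pos
    have hadd := my_divByMonic_add (g - C (g.eval a)) (C (g.eval a)) ((X - C a) ^ (j + 1))
      ((monic_X_sub_C a).pow _)
    rw [sub_add_cancel, hC, add_zero] at hadd
    rw [qCoeff_X_sub_C_eq, ← hadd, ← qCoeff_X_sub_C_eq]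
    exact (hterm (j + 1)).2 (by omega)
end

section
/- Let ν be a valuation on K[x] and Q a key polynomial for ν. Then Q is also a key polynomial for the truncation ν_Q. -/
open Polynomial

variable {K : Type*} [Field K] {Γ : Type*} [AddCommGroup Γ] [LinearOrder Γ] [IsOrderedAddMonoid Γ]

/-- If `g` has degree smaller than `Q`, the truncation agrees with `ν` on `g`. -/
lemma trunc_of_natDegree_lt (ν : AddValuation (Polynomial K) (WithTop Γ)) {Q : Polynomial K}
    (hm : Q.Monic) {g : Polynomial K} (hg : g.natDegree < Q.natDegree) :
    trunc (⇑ν) Q g = ν g := by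
  have hQ0 : Q ≠ 0 := hm.ne_zero
  have h0 : qCoeff Q g 0 * Q ^ 0 = g := by
    simp only [qCoeff, pow_zero, EuclideanDomain.div_one, mul_one]
    exact (Polynomial.mod_eq_self_iff hQ0).mpr (degree_lt_degree hg)
  have hi : ∀ i, 1 ≤ i → qCoeff Q g i * Q ^ i = 0 := by
    intro i hi1
    have hdiv : g / Q ^ i = 0 := by
      rw [Polynomial.div_eq_zero_iff (pow_ne_zero i hQ0)]
      apply degree_lt_degree
      rw [hm.natDegree_pow]
      calc g.natDegree < Q.natDegree := hg
        _ ≤ i * Q.natDegree := Nat.le_mul_of_pos_left _ hi1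
    simp [qCoeff, hdiv]
  apply le_antisymm
  · calc (Finset.range (g.natDegree + 1)).inf (fun i => ν (qCoeff Q g i * Q ^ i))
        ≤ ν (qCoeff Q g 0 * Q ^ 0) := Finset.inf_le (Finset.mem_range.mpr (Nat.succ_pos _))
      _ = ν g := by rw [h0]
  · apply Finset.le_inf
    intro i _
    rcases Nat.eq_zero_or_pos i with rfl | hpos
    · rw [h0]
    · rw [hi i hpos]
      simp

/-- The truncation agrees with `ν` on `Q` itself. -/
lemma trunc_self (ν : AddValuation (Polynomial K) (WithTop Γ)) {Q : Polynomial K}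
    (hm : Q.Monic) (hd : 1 ≤ Q.natDegree) :
    trunc (⇑ν) Q Q = ν Q := by
  have hQ0 : Q ≠ 0 := hm.ne_zero
  have h0 : qCoeff Q Q 0 * Q ^ 0 = 0 := by
    simp [qCoeff, EuclideanDomain.mod_self]
  have h1 : qCoeff Q Q 1 * Q ^ 1 = Q := by
    have : Q / Q ^ 1 = 1 := by rw [pow_one, EuclideanDomain.div_self hQ0]
    rw [qCoeff, this, pow_one]
    have h1Q : (1 : Polynomial K) % Q = 1 := by
      rw [Polynomial.mod_eq_self_iff hQ0]
      apply degree_lt_degree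
      simpa using (show 0 < Q.natDegree from hd)
    rw [h1Q, one_mul]
  have hi : ∀ i, 2 ≤ i → qCoeff Q Q i * Q ^ i = 0 := by
    intro i hi2
    have hdiv : Q / Q ^ i = 0 := by
      rw [Polynomial.div_eq_zero_iff (pow_ne_zero i hQ0)]
      apply degree_lt_degree
      rw [hm.natDegree_pow]
      calc Q.natDegree = 1 * Q.natDegree := (one_mul _).symm
        _ < i * Q.natDegree := by
            exact Nat.mul_lt_mul_of_lt_of_le (by omega) le_rfl hd
    simp [qCoeff, hdiv]
  apply le_antisymm
  · calc (Finset.range (Q.natDegree + 1)).inf (fun i => ν (qCoeff Q Q i * Q ^ i))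
        ≤ ν (qCoeff Q Q 1 * Q ^ 1) := Finset.inf_le (Finset.mem_range.mpr (by omega))
      _ = ν Q := by rw [h1]
  · apply Finset.le_inf
    intro i _
    match i, hi with
    | 0, _ => rw [h0]; simp
    | 1, _ => rw [h1]
    | (n+2), _ =>
      rw [hi (n+2) (by omega)]
      simp

/-- The support of `ν` as an ideal. -/
noncomputable def suppIdeal (ν : AddValuation (Polynomial K) (WithTop Γ)) :
    Ideal (Polynomial K) where
  carrier := {a | ν a = ⊤}
  add_mem' := by
    intro a b ha hb
    have := ν.map_add a b
    simp only [Set.mem_setOf_eq] at ha hb ⊢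
    rw [ha, hb, min_self] at this
    exact le_antisymm le_top this
  zero_mem' := ν.map_zero
  smul_mem' := by
    intro r a ha
    simp only [Set.mem_setOf_eq, smul_eq_mul] at ha ⊢
    rw [ν.map_mul, ha, add_top]

lemma exists_gen (ν : AddValuation (Polynomial K) (WithTop Γ)) {f : Polynomial K}
    (hf : f ≠ 0) (hft : ν f = ⊤) :
    ∃ p : Polynomial K, p ≠ 0 ∧ p ∣ f ∧ IsGenSupp (⇑ν) p := by
  obtain ⟨p, hp⟩ := (IsPrincipalIdealRing.principal (suppIdeal ν)).principal
  have hmem : ∀ g, ν g = ⊤ ↔ p ∣ g := by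
    intro g
    have : g ∈ suppIdeal ν ↔ ν g = ⊤ := Iff.rfl
    rw [← this, hp, Ideal.submodule_span_eq, Ideal.mem_span_singleton]
  have hpf : p ∣ f := (hmem f).mp hft
  have hp0 : p ≠ 0 := by
    rintro rfl
    exact hf (zero_dvd_iff.mp hpf)
  exact ⟨p, hp0, hpf, hmem⟩

lemma isGenSupp_trunc (ν : AddValuation (Polynomial K) (WithTop Γ)) {Q : Polynomial K}
    (h : IsGenSupp (⇑ν) Q) : IsGenSupp (trunc (⇑ν) Q) Q := by
  intro g
  rw [trunc, Finset.inf_eq_top_iff]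
  constructor
  · intro hg
    have h0 := hg 0 (Finset.mem_range.mpr (Nat.succ_pos _))
    simp only [qCoeff, pow_zero, EuclideanDomain.div_one, mul_one] at h0
    have hdvd : Q ∣ g % Q := (h _).mp h0
    have := EuclideanDomain.div_add_mod g Q
    calc Q ∣ Q * (g / Q) + g % Q := dvd_add (dvd_mul_right _ _) hdvd
      _ = g := this
  · intro hg i _
    apply (h _).mpr
    rcases Nat.eq_zero_or_pos i with rfl | hpos
    · have : g % Q = 0 := EuclideanDomain.mod_eq_zero.mpr hg
      simp [qCoeff, this]
    · exact Dvd.dvd.mul_left (dvd_pow_self Q (Nat.pos_iff_ne_zero.mp hpos)) _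

/-- If `Q` is a key polynomial for `ν`, then `Q` is a key polynomial for
the truncation `ν_Q`. -/
theorem stmt8 (ν : AddValuation (Polynomial K) (WithTop Γ)) (Q : Polynomial K)
    (hQ : IsKeyPoly (⇑ν) Q) :
    IsKeyPoly (trunc (⇑ν) Q) Q := by
  obtain ⟨hm, hk⟩ := hQ
  refine ⟨hm, fun f hf hE => ?_⟩
  by_cases hd : Q.natDegree = 0
  · simp [hd]
  have hd1 : 1 ≤ Q.natDegree := Nat.one_le_iff_ne_zero.mpr hd
  by_cases hdf : Q.natDegree ≤ f.natDegree
  · exact hdf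
  push_neg at hdf
  have hWf : trunc (⇑ν) Q f = ν f := trunc_of_natDegree_lt ν hm hdf
  rcases hE with hgen | ⟨hng, hC⟩
  · have hwf : trunc (⇑ν) Q f = ⊤ := (hgen f).mpr dvd_rfl
    rw [hWf] at hwf
    obtain ⟨p, hp0, hpf, hgp⟩ := exists_gen ν hf hwf
    exact le_trans (hk p hp0 (Or.inl hgp)) (Polynomial.natDegree_le_of_dvd hpf hf)
  · have hWQ : trunc (⇑ν) Q Q = ν Q := trunc_self ν hm hd1
    have hWdf : ∀ b, trunc (⇑ν) Q (Polynomial.hasseDeriv b f) = ν (Polynomial.hasseDeriv b f) := by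
      intro b
      apply trunc_of_natDegree_lt ν hm
      exact lt_of_le_of_lt (le_trans (Polynomial.natDegree_hasseDeriv_le f b) (Nat.sub_le _ _)) hdf
    have hWdQ : ∀ c, 1 ≤ c →
        trunc (⇑ν) Q (Polynomial.hasseDeriv c Q) = ν (Polynomial.hasseDeriv c Q) := by
      intro c hc
      apply trunc_of_natDegree_lt ν hm
      exact lt_of_le_of_lt (Polynomial.natDegree_hasseDeriv_le Q c) (Nat.sub_lt hd1 hc)
    have hVQ : ∀ c, ValidIdx (trunc (⇑ν) Q) Q c ↔ ValidIdx (⇑ν) Q c := by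
      intro c
      unfold ValidIdx
      constructor
      · rintro ⟨h1, h2, h3, h4⟩
        exact ⟨h1, h2, by rwa [hWQ] at h3, by rwa [hWdQ c h1] at h4⟩
      · rintro ⟨h1, h2, h3, h4⟩
        exact ⟨h1, h2, by rwa [hWQ], by rwa [hWdQ c h1]⟩
    have hVf : ∀ b, ValidIdx (trunc (⇑ν) Q) f b → ValidIdx (⇑ν) f b := by
      rintro b ⟨h1, h2, h3, h4⟩
      exact ⟨h1, h2, by rwa [hWf] at h3, by rwa [hWdf b] at h4⟩
    apply hk f hf
    right
    refine ⟨fun hgen => hng (isGenSupp_trunc ν hgen), ?_⟩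
    rcases hC with h1 | ⟨b, hb, hball⟩
    · exact Or.inl fun c hc => h1 c ((hVQ c).mpr hc)
    · refine Or.inr ⟨b, hVf b hb, fun c hc => ?_⟩
      have hr := hball c ((hVQ c).mpr hc)
      unfold RatioLE at hr ⊢
      rwa [hWQ, hWf, hWdf b, hWdQ c hc.1] at hr
end

section
/- Let ν be a valuation on K[x] and Q a key polynomial for ν. Suppose there exist e ∈ ℕ and h ∈ K[x] with deg(h) < deg(Q) and ν(Q^e) = ν(h). Then the residue of r = Q^e/h under the valuation ν_Q (extended to K(x)) is transcendental over the residue field Kν. -/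
open Polynomial

variable {K : Type*} [Field K] {Γ : Type*} [AddCommGroup Γ] [LinearOrder Γ] [IsOrderedAddMonoid Γ]

namespace Stmt10Aux


/-- additivity of `divByMonic`. -/
lemma add_divByMonic' {M : Polynomial K} (hM : M.Monic) (f g : Polynomial K) :
    (f + g) /ₘ M = f /ₘ M + g /ₘ M := by
  refine (div_modByMonic_unique _ (f %ₘ M + g %ₘ M) hM ⟨?_, ?_⟩).1
  · have hf := modByMonic_add_div f M
    have hg := modByMonic_add_div g M
    rw [mul_add]
    linear_combination hf + hg
  · exact (degree_add_le _ _).trans_lt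
      (max_lt (degree_modByMonic_lt f hM) (degree_modByMonic_lt g hM))

variable {Q : Polynomial K}

section TruncTheory

variable (hQ : Q.Monic)
include hQ

lemma qCoeff_eq (f : Polynomial K) (i : ℕ) : qCoeff Q f i = f /ₘ Q ^ i %ₘ Q := by
  rw [qCoeff, divByMonic_eq_div _ (hQ.pow i), modByMonic_eq_mod _ hQ]

lemma qCoeff_zero_poly (i : ℕ) : qCoeff (K := K) Q 0 i = 0 := by
  rw [qCoeff_eq hQ, zero_divByMonic, zero_modByMonic]

lemma qCoeff_add (f g : Polynomial K) (i : ℕ) :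
    qCoeff Q (f + g) i = qCoeff Q f i + qCoeff Q g i := by
  rw [qCoeff_eq hQ, qCoeff_eq hQ, qCoeff_eq hQ, add_divByMonic' (hQ.pow i), add_modByMonic]

lemma qCoeff_neg (f : Polynomial K) (i : ℕ) : qCoeff Q (-f) i = -(qCoeff Q f i) := by
  have := qCoeff_add hQ f (-f) i
  rw [add_neg_cancel, qCoeff_zero_poly hQ] at this
  exact (neg_eq_of_add_eq_zero_right this.symm).symm

lemma degree_pow_Q (k : ℕ) : (Q ^ k).degree = ((k * Q.natDegree : ℕ) : WithBot ℕ) := by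
  rw [degree_eq_natDegree (hQ.pow k).ne_zero, hQ.natDegree_pow]

lemma qCoeff_natDegree_lt (hd : 1 ≤ Q.natDegree) (f : Polynomial K) (i : ℕ) :
    (qCoeff Q f i).natDegree < Q.natDegree := by
  rw [qCoeff_eq hQ]
  rcases eq_or_ne (f /ₘ Q ^ i %ₘ Q) 0 with h0 | h0
  · rw [h0]; simp; omega
  · have := degree_modByMonic_lt (f /ₘ Q ^ i) hQ
    rwa [degree_eq_natDegree h0, degree_eq_natDegree hQ.ne_zero, Nat.cast_lt] at this

lemma qCoeff_eq_zero_of_degree_lt {f : Polynomial K} {i : ℕ}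
    (h : f.degree < (Q ^ i).degree) : qCoeff Q f i = 0 := by
  rw [qCoeff_eq hQ, (divByMonic_eq_zero_iff (hQ.pow i)).2 h, zero_modByMonic]

lemma degree_lt_pow (hd : 1 ≤ Q.natDegree) {f : Polynomial K} {k : ℕ}
    (h : f.natDegree < k * Q.natDegree) : f.degree < (Q ^ k).degree := by
  rw [degree_pow_Q hQ]
  rcases eq_or_ne f 0 with rfl | hf
  · simp [degree_zero]
    exact WithBot.bot_lt_coe _
  · rw [degree_eq_natDegree hf]
    exact_mod_cast h

lemma qCoeff_eq_zero_of_natDegree_lt (hd : 1 ≤ Q.natDegree) {f : Polynomial K} {i : ℕ}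
    (h : f.natDegree < i) : qCoeff Q f i = 0 :=
  qCoeff_eq_zero_of_degree_lt hQ (degree_lt_pow hQ hd (h.trans_le (Nat.le_mul_of_pos_right i hd)))

end TruncTheory

-- inf helpers

lemma inf_range_succ_bot (F : ℕ → WithTop Γ) (n : ℕ) :
    (Finset.range (n + 1)).inf F = F 0 ⊓ (Finset.range n).inf (fun i => F (i + 1)) := by
  induction n with
  | zero => simp
  | succ n ih =>
      rw [Finset.range_add_one, Finset.inf_insert, ih, Finset.range_add_one (n := n),
        Finset.inf_insert]
      rw [inf_left_comm]

lemma add_min' (x a b : WithTop Γ) : x + min a b = min (x + a) (x + b) := by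
  rcases le_total a b with hab | hab
  · rw [min_eq_left hab, min_eq_left (add_le_add_right hab x)]
  · rw [min_eq_right hab, min_eq_right (add_le_add_right hab x)]

lemma add_inf_range (x : WithTop Γ) (F : ℕ → WithTop Γ) (n : ℕ) (hn : 0 < n) :
    x + (Finset.range n).inf F = (Finset.range n).inf (fun i => x + F i) := by
  induction n with
  | zero => omega
  | succ n ih =>
      rcases Nat.eq_zero_or_pos n with rfl | hpos
      · simp
      · rw [Finset.range_add_one, Finset.inf_insert, Finset.inf_insert, ← ih hpos]
        have : ∀ a b : WithTop Γ, x + (a ⊓ b) = (x + a) ⊓ (x + b) := by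
          intro a b
          rcases le_total a b with hab | hab
          · rw [inf_eq_left.2 hab, inf_eq_left.2 (add_le_add_right hab x)]
          · rw [inf_eq_right.2 hab, inf_eq_right.2 (add_le_add_right hab x)]
        exact this _ _




section TruncVal

variable (ν : AddValuation (Polynomial K) (WithTop Γ)) {Q : Polynomial K}
variable (hQ : Q.Monic) (hd : 1 ≤ Q.natDegree)
include hQ hd

lemma trunc_le (f : Polynomial K) (i : ℕ) :
    trunc (⇑ν) Q f ≤ ν (qCoeff Q f i * Q ^ i) := by
  rcases le_or_gt i f.natDegree with hi | hi
  · exact Finset.inf_le (Finset.mem_range.2 (Nat.lt_succ_of_le hi))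
  · rw [qCoeff_eq_zero_of_natDegree_lt hQ hd hi, zero_mul, AddValuation.map_zero]
    exact le_top

lemma trunc_eq_inf {f : Polynomial K} {N : ℕ} (hN : f.natDegree < N) :
    trunc (⇑ν) Q f = (Finset.range N).inf fun i => ν (qCoeff Q f i * Q ^ i) := by
  refine le_antisymm (Finset.le_inf fun i _ => trunc_le ν hQ hd f i)
    (le_trans (Finset.inf_mono (Finset.range_subset_range.2 hN)) le_rfl)

omit hd in
lemma trunc_zero' : trunc (⇑ν) Q 0 = ⊤ := by
  rw [trunc]
  simp [qCoeff_zero_poly hQ]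

lemma trunc_add_ge (f g : Polynomial K) :
    min (trunc (⇑ν) Q f) (trunc (⇑ν) Q g) ≤ trunc (⇑ν) Q (f + g) := by
  refine Finset.le_inf fun i _ => ?_
  rw [qCoeff_add hQ, add_mul]
  refine le_trans ?_ (ν.map_add _ _)
  exact min_le_min (trunc_le ν hQ hd f i) (trunc_le ν hQ hd g i)

lemma trunc_sub_ge (f g : Polynomial K) :
    min (trunc (⇑ν) Q f) (trunc (⇑ν) Q g) ≤ trunc (⇑ν) Q (f - g) := by
  have := trunc_add_ge ν hQ hd f (-g)
  have hng : trunc (⇑ν) Q (-g) = trunc (⇑ν) Q g := by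
    unfold trunc
    rw [natDegree_neg]
    refine Finset.inf_congr rfl fun i _ => ?_
    rw [qCoeff_neg hQ, neg_mul, ν.map_neg]
  rw [hng] at this
  simpa [sub_eq_add_neg] using this

/-- trunc of a polynomial of degree `< deg Q` is its value. -/
lemma trunc_of_degree_lt {f : Polynomial K} (hf : f.natDegree < Q.natDegree) :
    trunc (⇑ν) Q f = ν f := by
  refine le_antisymm ?_ ?_
  · have h0 : qCoeff Q f 0 = f := by
      rw [qCoeff_eq hQ, pow_zero, divByMonic_one]
      rcases eq_or_ne f 0 with rfl | hf0
      · simp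
      · exact (modByMonic_eq_self_iff hQ).2
          (by rw [degree_eq_natDegree hf0, degree_eq_natDegree hQ.ne_zero]; exact_mod_cast hf)
    have := trunc_le ν hQ hd f 0
    rwa [h0, pow_zero, mul_one] at this
  · refine Finset.le_inf fun i hi => ?_
    rcases Nat.eq_zero_or_pos i with rfl | hipos
    · have h0 : qCoeff Q f 0 = f := by
        rw [qCoeff_eq hQ, pow_zero, divByMonic_one]
        rcases eq_or_ne f 0 with rfl | hf0
        · simp
        · exact (modByMonic_eq_self_iff hQ).2
            (by rw [degree_eq_natDegree hf0, degree_eq_natDegree hQ.ne_zero]; exact_mod_cast hf)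
      rw [h0, pow_zero, mul_one]
    · have : qCoeff Q f i = 0 := by
        refine qCoeff_eq_zero_of_degree_lt hQ
          (lt_of_lt_of_le (degree_lt_pow hQ hd (f := f) (k := 1) (by simpa using hf)) ?_)
        rw [degree_pow_Q hQ, degree_pow_Q hQ, Nat.cast_le, one_mul]
        exact Nat.le_mul_of_pos_left _ hipos
      rw [this, zero_mul, AddValuation.map_zero]
      exact le_top

/-- `qCoeff` in degree `i+1`. -/
lemma qCoeff_succ (f : Polynomial K) (i : ℕ) :
    qCoeff Q f (i + 1) = qCoeff Q (f /ₘ Q) i := by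
  rw [qCoeff_eq hQ, qCoeff_eq hQ]
  congr 1
  refine (div_modByMonic_unique (f /ₘ Q /ₘ Q ^ i) (Q * (f /ₘ Q %ₘ Q ^ i) + f %ₘ Q)
    (hQ.pow (i+1)) ⟨?_, ?_⟩).1
  · have h1 := modByMonic_add_div (f /ₘ Q) (Q ^ i)
    have h2 := modByMonic_add_div f Q
    rw [pow_succ']
    linear_combination Q * h1 + h2
  · have hQb : Q.degree ≠ ⊥ := by
      rw [degree_eq_natDegree hQ.ne_zero]; exact WithBot.coe_ne_bot
    refine (degree_add_le _ _).trans_lt (max_lt ?_ ?_)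
    · calc degree (Q * (f /ₘ Q %ₘ Q ^ i)) ≤ Q.degree + (f /ₘ Q %ₘ Q ^ i).degree :=
            degree_mul_le _ _
        _ < Q.degree + (Q ^ i).degree := by
            rw [WithBot.add_lt_add_iff_left hQb]
            exact degree_modByMonic_lt _ (hQ.pow i)
        _ = (Q ^ (i+1)).degree := by
            rw [degree_pow_Q hQ, degree_pow_Q hQ, degree_eq_natDegree hQ.ne_zero,
              ← Nat.cast_add]
            congr 1
            ring
    · refine lt_of_lt_of_le (degree_modByMonic_lt f hQ) ?_
      rw [degree_eq_natDegree hQ.ne_zero, degree_pow_Q hQ, Nat.cast_le]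
      exact Nat.le_mul_of_pos_left _ (Nat.succ_pos i)

/-- recursion for `trunc`. -/
lemma trunc_rec (f : Polynomial K) :
    trunc (⇑ν) Q f = min (ν (f %ₘ Q)) (ν Q + trunc (⇑ν) Q (f /ₘ Q)) := by
  have hrec := trunc_eq_inf ν hQ hd (f := f) (N := f.natDegree + 2) (by omega)
  rw [hrec, inf_range_succ_bot]
  congr 1
  · rw [qCoeff_eq hQ, pow_zero, divByMonic_one, mul_one]
  · have hdiv : (f /ₘ Q).natDegree < f.natDegree + 1 := by
      have := natDegree_divByMonic f hQ
      omega
    rw [trunc_eq_inf ν hQ hd hdiv, add_inf_range _ _ _ (Nat.succ_pos _)]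
    refine Finset.inf_congr rfl fun i _ => ?_
    rw [qCoeff_succ hQ hd, pow_succ', ← mul_assoc, mul_comm _ Q, mul_assoc,
      ν.map_mul]


lemma qCoeff_zero_idx (f : Polynomial K) : qCoeff Q f 0 = f %ₘ Q := by
  rw [qCoeff_eq hQ, pow_zero, divByMonic_one]

omit ν in
/-- uniqueness of `Q`-expansions with small coefficients. -/
lemma qCoeff_of_rep : ∀ (N : ℕ) (a : ℕ → Polynomial K) (f : Polynomial K),
    (∀ j, (a j).natDegree < Q.natDegree) → f = ∑ j ∈ Finset.range N, a j * Q ^ j →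
    ∀ m, qCoeff Q f m = if m < N then a m else 0 := by
  intro N
  induction N with
  | zero =>
      intro a f _ hf m
      simp only [Finset.range_zero, Finset.sum_empty] at hf
      subst hf
      simp [qCoeff_zero_poly hQ]
  | succ N ihN =>
      intro a f ha hf m
      have hsplit : f = a 0 + Q * ∑ j ∈ Finset.range N, a (j + 1) * Q ^ j := by
        rw [hf, Finset.sum_range_succ']
        rw [Finset.mul_sum]
        simp only [pow_zero, mul_one]
        rw [add_comm]
        congr 1
        refine Finset.sum_congr rfl fun j _ => ?_
        ring
      have hdeg0 : (a 0).degree < Q.degree := by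
        rcases eq_or_ne (a 0) 0 with h0 | h0
        · rw [h0, degree_zero]
          rw [degree_eq_natDegree hQ.ne_zero]
          exact WithBot.bot_lt_coe _
        · rw [degree_eq_natDegree h0, degree_eq_natDegree hQ.ne_zero]
          exact_mod_cast ha 0
      have huni := div_modByMonic_unique (∑ j ∈ Finset.range N, a (j + 1) * Q ^ j) (a 0) hQ
        ⟨by rw [← hsplit], hdeg0⟩
      rcases m with _ | m
      · rw [qCoeff_zero_idx hQ hd, huni.2]
        simp
      · rw [qCoeff_succ hQ hd, huni.1,
          ihN (fun j => a (j + 1)) _ (fun j => ha (j + 1)) rfl m]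
        by_cases hmN : m < N <;> simp [hmN, Nat.succ_lt_succ_iff]

lemma trunc_C_mul_pow (c : K) (k : ℕ) :
    trunc (⇑ν) Q (C c * Q ^ k) = ν (C c * Q ^ k) := by
  rcases eq_or_ne c 0 with rfl | hc
  · simp only [map_zero, zero_mul]
    rw [trunc_zero' ν hQ]
    rw [AddValuation.map_zero]
  · have hrep : C c * Q ^ k = ∑ j ∈ Finset.range (k + 1),
        (if j = k then C c else 0) * Q ^ j := by
      rw [Finset.sum_congr rfl (fun j _ => by rw [ite_mul, zero_mul]),
        Finset.sum_ite_eq' (Finset.range (k + 1)) k (fun j => C c * Q ^ j)]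
      simp
    have hq := qCoeff_of_rep hQ hd (k + 1) _ _ (fun j => by
      split <;> simp <;> omega) hrep
    refine le_antisymm ?_ ?_
    · have := trunc_le ν hQ hd (C c * Q ^ k) k
      rwa [hq k, if_pos (Nat.lt_succ_self k), if_pos rfl] at this
    · refine Finset.le_inf fun i _ => ?_
      rw [hq i]
      rcases eq_or_ne i k with rfl | hik
      · rw [if_pos (Nat.lt_succ_self i), if_pos rfl]
      · by_cases hik' : i < k + 1
        · rw [if_pos hik', if_neg hik, zero_mul, AddValuation.map_zero]; exact le_top
        · rw [if_neg hik', zero_mul, AddValuation.map_zero]; exact le_top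

lemma trunc_add_eq_right {f g : Polynomial K} (hlt : trunc (⇑ν) Q g < trunc (⇑ν) Q f) :
    trunc (⇑ν) Q (f + g) = trunc (⇑ν) Q g := by
  refine le_antisymm ?_ (by simpa [min_eq_right hlt.le] using trunc_add_ge ν hQ hd f g)
  by_contra hcon
  push_neg at hcon
  have : trunc (⇑ν) Q g = trunc (⇑ν) Q ((f + g) - f) := by ring_nf
  rw [this] at hcon hlt
  have h2 := trunc_sub_ge ν hQ hd (f + g) f
  rcases min_le_iff.1 h2 with h | h
  · exact absurd h (not_le.2 hcon)
  · exact absurd h (not_le.2 hlt)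


/-- multiplicativity of `trunc` for multiplication by a polynomial of small degree,
assuming the core lemma (L5'). -/
lemma trunc_mul_small (hνQ : ν Q ≠ ⊤)
    (hL5 : ∀ a b : Polynomial K, a ≠ 0 → a.natDegree < Q.natDegree →
      b ≠ 0 → b.natDegree < Q.natDegree →
      ν ((a * b) %ₘ Q) = ν a + ν b ∧ ν a + ν b < ν ((a * b) /ₘ Q) + ν Q)
    {a : Polynomial K} (ha : a ≠ 0) (hda : a.natDegree < Q.natDegree) :
    ∀ (n : ℕ) (f : Polynomial K), f.natDegree ≤ n →
      trunc (⇑ν) Q (a * f) = ν a + trunc (⇑ν) Q f := by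
  intro n
  induction n using Nat.strong_induction_on with
  | _ n ih =>
    intro f hfn
    rcases eq_or_ne f 0 with rfl | hf0
    · rw [mul_zero, trunc_zero' ν hQ, add_top]
    set f0 := f %ₘ Q with hf0def
    set f1 := f /ₘ Q with hf1def
    set r := (a * f0) %ₘ Q with hrdef
    set q := (a * f0) /ₘ Q with hqdef
    have hrec : trunc (⇑ν) Q (a * f) = min (ν r) (ν Q + trunc (⇑ν) Q (q + a * f1)) := by
      have hid : a * f = r + Q * (q + a * f1) := by
        have h1 := modByMonic_add_div (a * f0) Q
        have h2 := modByMonic_add_div f Q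
        rw [← hf0def, ← hf1def] at h2
        rw [← hrdef, ← hqdef] at h1
        calc a * f = a * (f0 + Q * f1) := by rw [h2]
          _ = (a * f0) + Q * (a * f1) := by ring
          _ = (r + Q * q) + Q * (a * f1) := by rw [h1]
          _ = r + Q * (q + a * f1) := by ring
      have huni := div_modByMonic_unique (q + a * f1) r hQ
        ⟨hid.symm, degree_modByMonic_lt _ hQ⟩
      rw [trunc_rec ν hQ hd (a * f), huni.1, huni.2]
    have hrecf : trunc (⇑ν) Q f = min (ν f0) (ν Q + trunc (⇑ν) Q f1) := trunc_rec ν hQ hd f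
    have hf1small : f1 ≠ 0 → (f1.natDegree < n ∧ 1 ≤ n) := by
      intro h1
      have hdeg : f1.natDegree = f.natDegree - Q.natDegree := natDegree_divByMonic f hQ
      have : ¬ (f.degree < Q.degree) := by
        intro hcon
        exact h1 (by rw [hf1def, (divByMonic_eq_zero_iff hQ).2 hcon])
      have hQf : Q.natDegree ≤ f.natDegree := by
        by_contra hcc
        push_neg at hcc
        exact this (by
          rw [degree_eq_natDegree hf0, degree_eq_natDegree hQ.ne_zero]
          exact_mod_cast hcc)
      constructor
      · omega
      · omega
    rcases eq_or_ne f0 0 with h00 | h00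
    · -- f %ₘ Q = 0
      have hr0 : r = 0 := by rw [hrdef, h00, mul_zero, zero_modByMonic]
      have hq0 : q = 0 := by rw [hqdef, h00, mul_zero, zero_divByMonic]
      have hf1ne : f1 ≠ 0 := by
        intro h1
        exact hf0 (by
          have h2 := modByMonic_add_div f Q
          rw [← hf0def, ← hf1def, h00, h1, mul_zero, add_zero] at h2
          exact h2.symm)
      obtain ⟨hs1, hs2⟩ := hf1small hf1ne
      have hih := ih (n - 1) (by omega) f1 (by omega)
      rw [hrec, hr0, hq0, zero_add, AddValuation.map_zero, hrecf, h00,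
        AddValuation.map_zero, hih]
      rw [min_eq_right le_top, min_eq_right le_top]
      rw [← add_assoc, ← add_assoc, add_comm (ν Q) (ν a)]
    · -- f %ₘ Q ≠ 0
      have hdf0 : f0.natDegree < Q.natDegree := qCoeff_natDegree_lt hQ hd f 0 |>.trans_le' (by
        rw [qCoeff_zero_idx hQ hd, ← hf0def])
      obtain ⟨hL1, hL2⟩ := hL5 a f0 ha hda h00 hdf0
      rw [← hrdef] at hL1
      rw [← hqdef] at hL2
      have htq : trunc (⇑ν) Q q = ν q := by
        refine trunc_of_degree_lt ν hQ hd ?_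
        have hq2 : q.natDegree = (a * f0).natDegree - Q.natDegree := natDegree_divByMonic _ hQ
        have : (a * f0).natDegree ≤ a.natDegree + f0.natDegree := natDegree_mul_le
        omega
      have hrq : ν r ≤ ν Q + ν q := by
        rw [hL1]
        exact le_of_lt (hL2.trans_eq (add_comm _ _))
      rcases eq_or_ne f1 0 with h10 | h10
      · -- f /ₘ Q = 0
        rw [hrec, h10, mul_zero, add_zero, htq, hrecf, h10, trunc_zero' ν hQ, add_top,
          min_eq_left le_top, min_eq_left hrq, hL1]
      · -- f /ₘ Q ≠ 0
        obtain ⟨hs1, hs2⟩ := hf1small h10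
        have hih : trunc (⇑ν) Q (a * f1) = ν a + trunc (⇑ν) Q f1 :=
          ih (n - 1) (by omega) f1 (by omega)
        set X := trunc (⇑ν) Q f1 with hX
        have hf0top : ν f0 ≠ ⊤ := by
          intro hc
          rw [hc, add_top] at hL2
          exact (not_top_lt hL2)
        rw [hrec, hrecf]
        refine le_antisymm ?_ ?_
        · rcases le_total (ν f0) (ν Q + X) with hcase | hcase
          · rw [min_eq_left hcase]
            exact le_trans (min_le_left _ _) (by rw [hL1])
          · rw [min_eq_right hcase]
            have hstrict : ν a + X < ν q := by
              have h1 : ν Q + (ν a + X) ≤ ν a + ν f0 := by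
                calc ν Q + (ν a + X) = ν a + (ν Q + X) := by rw [add_left_comm]
                  _ ≤ ν a + ν f0 := add_le_add_right hcase _
              have h2 : ν Q + (ν a + X) < ν Q + ν q := by
                refine lt_of_le_of_lt h1 (hL2.trans_eq (add_comm _ _))
              exact (WithTop.add_lt_add_iff_left hνQ).1 h2
            have hsum : trunc (⇑ν) Q (q + a * f1) = ν a + X := by
              rw [trunc_add_eq_right ν hQ hd (by rw [htq, hih]; exact hstrict), hih]
            refine le_trans (min_le_right _ _) ?_
            rw [hsum]
            exact le_of_eq (add_left_comm _ _ _)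
        · refine le_min ?_ ?_
          · rw [hL1]
            exact add_le_add_right (min_le_left _ _) _
          · have hgmin : min (ν q) (ν a + X) ≤ trunc (⇑ν) Q (q + a * f1) := by
              have := trunc_add_ge ν hQ hd q (a * f1)
              rwa [htq, hih] at this
            calc ν a + min (ν f0) (ν Q + X)
                ≤ min (ν Q + ν q) (ν Q + (ν a + X)) := by
                  refine le_min ?_ ?_
                  · exact le_trans (add_le_add_right (min_le_left _ _) _)
                      (le_of_lt (hL2.trans_eq (add_comm _ _)))
                  · refine le_trans (add_le_add_right (min_le_right _ _) _) (le_of_eq ?_)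
                    rw [add_left_comm]
              _ = ν Q + min (ν q) (ν a + X) := (add_min' _ _ _).symm
              _ ≤ ν Q + trunc (⇑ν) Q (q + a * f1) := add_le_add_right hgmin _
end TruncVal


/-! ### Key polynomial theory : the core product lemma -/

section KeyTheory

variable (ν : AddValuation (Polynomial K) (WithTop Γ))

/-- the value of `p` as an element of `Γ` (junk value `0` on the support). -/
noncomputable def vg (p : Polynomial K) : Γ := WithTop.untopD 0 (ν p)

lemma vg_spec {p : Polynomial K} (h : ν p ≠ ⊤) : ((vg ν p : Γ) : WithTop Γ) = ν p := by
  obtain ⟨g, hg⟩ := Option.ne_none_iff_exists'.mp h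
  rw [vg, hg]
  rfl

lemma vg_eq {p : Polynomial K} {x : Γ} (h : ν p = ↑x) : vg ν p = x := by
  rw [vg, h]
  rfl

variable {ν}

lemma vg_mul {p r : Polynomial K} (hp : ν p ≠ ⊤) (hr : ν r ≠ ⊤) :
    vg ν (p * r) = vg ν p + vg ν r := by
  have hh : ν (p * r) = ((vg ν p + vg ν r : Γ) : WithTop Γ) := by
    rw [AddValuation.map_mul, ← vg_spec (ν := ν) hp, ← vg_spec (ν := ν) hr, WithTop.coe_add]
  exact vg_eq (ν := ν) hh

variable {Q : Polynomial K}
variable (hkey : IsKeyPoly (⇑ν) Q) (hd : 1 ≤ Q.natDegree)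
include hkey hd

lemma small_ne_top {p : Polynomial K} (hp : p ≠ 0) (hdp : p.natDegree < Q.natDegree) :
    ν p ≠ ⊤ := by
  intro htop
  have hPID : (AddValuation.supp ν).IsPrincipal := IsPrincipalIdealRing.principal _
  set g := Submodule.IsPrincipal.generator (AddValuation.supp ν) with hgdef
  have hgen : IsGenSupp (⇑ν) g := by
    intro x
    rw [← AddValuation.mem_supp_iff, ← Ideal.span_singleton_generator (AddValuation.supp ν)]
    exact Ideal.mem_span_singleton
  have hpg : g ∣ p := (hgen p).1 htop
  have hgne : g ≠ 0 := by
    intro hg0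
    rw [hg0] at hpg
    exact hp (zero_dvd_iff.1 hpg)
  have := hkey.2 g hgne (Or.inl hgen)
  have hle := natDegree_le_of_dvd hpg hp
  omega

lemma not_epsge {f : Polynomial K} (hf : f ≠ 0) (hdf : f.natDegree < Q.natDegree) :
    ¬ EpsGE (⇑ν) f Q :=
  fun hE => absurd (hkey.2 f hf hE) (by omega)

lemma exists_valid (hng : ¬ IsGenSupp (⇑ν) Q) : ∃ c, ValidIdx (⇑ν) Q c := by
  by_contra hno
  push_neg at hno
  have h1 : (1 : Polynomial K) ≠ 0 := one_ne_zero
  have hd1 : (1 : Polynomial K).natDegree < Q.natDegree := by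
    rw [natDegree_one]; omega
  exact not_epsge hkey hd h1 hd1 (Or.inr ⟨hng, Or.inl fun c hc => hno c hc⟩)

lemma ratio_witness (hng : ¬ IsGenSupp (⇑ν) Q) {f : Polynomial K} (hf : f ≠ 0)
    (hdf : f.natDegree < Q.natDegree) {b : ℕ} (hb : ValidIdx (⇑ν) f b) :
    ∃ c, ValidIdx (⇑ν) Q c ∧ ¬ RatioLE (⇑ν) Q c f b := by
  by_contra hcon
  push_neg at hcon
  exact not_epsge hkey hd hf hdf (Or.inr ⟨hng, Or.inr ⟨b, hb, fun c hc => hcon c hc⟩⟩)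

omit hkey hd in
lemma ratioLE_iff {c m : ℕ} (hc : ValidIdx (⇑ν) Q c) (hm : ValidIdx (⇑ν) Q m) :
    RatioLE (⇑ν) Q c Q m ↔
      m • (vg ν Q - vg ν (Polynomial.hasseDeriv c Q)) ≤
        c • (vg ν Q - vg ν (Polynomial.hasseDeriv m Q)) := by
  obtain ⟨-, -, hQt, hct⟩ := hc
  obtain ⟨-, -, -, hmt⟩ := hm
  rw [RatioLE, ← vg_spec (ν := ν) hQt, ← vg_spec (ν := ν) hct, ← vg_spec (ν := ν) hmt]
  rw [smul_sub, smul_sub, sub_le_sub_iff]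
  constructor
  · intro h
    exact_mod_cast h
  · intro h
    exact_mod_cast h

/-- existence of an index of maximal ratio for `Q`. -/
lemma exists_max (hng : ¬ IsGenSupp (⇑ν) Q) :
    ∃ m, ValidIdx (⇑ν) Q m ∧ ∀ c, ValidIdx (⇑ν) Q c →
      m • (vg ν Q - vg ν (Polynomial.hasseDeriv c Q)) ≤
        c • (vg ν Q - vg ν (Polynomial.hasseDeriv m Q)) := by
  set u : ℕ → Γ := fun c => vg ν Q - vg ν (Polynomial.hasseDeriv c Q) with hu
  have haux : ∀ n : ℕ, (∃ c, c ≤ n ∧ ValidIdx (⇑ν) Q c) →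
      ∃ m, ValidIdx (⇑ν) Q m ∧ ∀ c, c ≤ n → ValidIdx (⇑ν) Q c → m • u c ≤ c • u m := by
    intro n
    induction n with
    | zero =>
        rintro ⟨c, hc0, hcv⟩
        have := hcv.1
        omega
    | succ n ihn =>
        rintro ⟨c, hcn, hcv⟩
        by_cases hex : ∃ c, c ≤ n ∧ ValidIdx (⇑ν) Q c
        · obtain ⟨m, hmv, hmax⟩ := ihn hex
          by_cases hv : ValidIdx (⇑ν) Q (n + 1)
          · rcases le_total ((n+1) • u m) (m • u (n+1)) with hcmp | hcmp
            · refine ⟨n + 1, hv, fun c hc hcval => ?_⟩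
              rcases Nat.lt_succ_iff_lt_or_eq.1 (Nat.lt_succ_of_le hc) with hc' | rfl
              · have h1 : m • u c ≤ c • u m := hmax c (by omega) hcval
                have hm1 : m ≠ 0 := by have := hmv.1; omega
                refine le_of_nsmul_le_nsmul_right hm1 ?_
                calc m • ((n+1) • u c) = (n+1) • (m • u c) := smul_comm _ _ _
                  _ ≤ (n+1) • (c • u m) := nsmul_le_nsmul_right h1 _
                  _ = c • ((n+1) • u m) := smul_comm _ _ _
                  _ ≤ c • (m • u (n+1)) := nsmul_le_nsmul_right hcmp _
                  _ = m • (c • u (n+1)) := smul_comm _ _ _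
              · exact le_of_eq rfl
            · exact ⟨m, hmv, fun c hc hcval => by
                rcases Nat.lt_succ_iff_lt_or_eq.1 (Nat.lt_succ_of_le hc) with hc' | rfl
                · exact hmax c (by omega) hcval
                · exact hcmp⟩
          · refine ⟨m, hmv, fun c hc hcval => ?_⟩
            rcases Nat.lt_succ_iff_lt_or_eq.1 (Nat.lt_succ_of_le hc) with hc' | rfl
            · exact hmax c (by omega) hcval
            · exact absurd hcval hv
        · have hc1 : c = n + 1 := by
            rcases Nat.lt_succ_iff_lt_or_eq.1 (Nat.lt_succ_of_le hcn) with h' | h'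
            · exact absurd ⟨c, by omega, hcv⟩ hex
            · exact h'
          rw [hc1] at hcv
          refine ⟨n + 1, hcv, fun c' hc' hcval => ?_⟩
          rcases Nat.lt_succ_iff_lt_or_eq.1 (Nat.lt_succ_of_le hc') with h' | rfl
          · exact absurd ⟨c', by omega, hcval⟩ hex
          · exact le_of_eq rfl
  obtain ⟨c0, hc0⟩ := exists_valid hkey hd hng
  obtain ⟨m, hmv, hmax⟩ := haux Q.natDegree ⟨c0, hc0.2.1, hc0⟩
  exact ⟨m, hmv, fun c hcval => hmax c hcval.2.1 hcval⟩


lemma deriv_ratio_lt (hng : ¬ IsGenSupp (⇑ν) Q) {m : ℕ} (hm : ValidIdx (⇑ν) Q m)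
    (hmax : ∀ c, ValidIdx (⇑ν) Q c →
      m • (vg ν Q - vg ν (Polynomial.hasseDeriv c Q)) ≤
        c • (vg ν Q - vg ν (Polynomial.hasseDeriv m Q)))
    {f : Polynomial K} (hf : f ≠ 0) (hdf : f.natDegree < Q.natDegree)
    {b : ℕ} (hb : ValidIdx (⇑ν) f b) :
    m • (vg ν f - vg ν (Polynomial.hasseDeriv b f)) <
      b • (vg ν Q - vg ν (Polynomial.hasseDeriv m Q)) := by
  obtain ⟨c, hc, hnr⟩ := ratio_witness hkey hd hng hf hdf hb
  have hstrict : c • (vg ν f - vg ν (Polynomial.hasseDeriv b f)) <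
      b • (vg ν Q - vg ν (Polynomial.hasseDeriv c Q)) := by
    have hnr' : ¬ (b • ν Q + c • ν (Polynomial.hasseDeriv b f) ≤
        c • ν f + b • ν (Polynomial.hasseDeriv c Q)) := hnr
    have hlt := lt_of_not_ge hnr'
    rw [← vg_spec (ν := ν) hb.2.2.1, ← vg_spec (ν := ν) hb.2.2.2,
      ← vg_spec (ν := ν) hc.2.2.1, ← vg_spec (ν := ν) hc.2.2.2] at hlt
    rw [smul_sub, smul_sub, sub_lt_sub_iff]
    exact_mod_cast hlt
  have hmc := hmax c hc
  have hm1 : m ≠ 0 := by have := hm.1; omega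
  have hc1 : c ≠ 0 := by have := hc.1; omega
  refine lt_of_nsmul_lt_nsmul_right c ?_
  calc c • (m • (vg ν f - vg ν (Polynomial.hasseDeriv b f)))
      = m • (c • (vg ν f - vg ν (Polynomial.hasseDeriv b f))) := smul_comm _ _ _
    _ < m • (b • (vg ν Q - vg ν (Polynomial.hasseDeriv c Q))) :=
        nsmul_lt_nsmul_right hm1 hstrict
    _ = b • (m • (vg ν Q - vg ν (Polynomial.hasseDeriv c Q))) := smul_comm _ _ _
    _ ≤ b • (c • (vg ν Q - vg ν (Polynomial.hasseDeriv m Q))) := nsmul_le_nsmul_right hmc _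
    _ = c • (b • (vg ν Q - vg ν (Polynomial.hasseDeriv m Q))) := smul_comm _ _ _


lemma prod_ratio_lt (hng : ¬ IsGenSupp (⇑ν) Q) {m : ℕ} (hm : ValidIdx (⇑ν) Q m)
    (hmax : ∀ c, ValidIdx (⇑ν) Q c →
      m • (vg ν Q - vg ν (Polynomial.hasseDeriv c Q)) ≤
        c • (vg ν Q - vg ν (Polynomial.hasseDeriv m Q)))
    {a b : Polynomial K} (ha : a ≠ 0) (hda : a.natDegree < Q.natDegree)
    (hb : b ≠ 0) (hdb : b.natDegree < Q.natDegree)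
    {k : ℕ} (hk : ValidIdx (⇑ν) (a * b) k) :
    m • (vg ν (a * b) - vg ν (Polynomial.hasseDeriv k (a * b))) <
      k • (vg ν Q - vg ν (Polynomial.hasseDeriv m Q)) := by
  set u : Γ := vg ν Q - vg ν (Polynomial.hasseDeriv m Q) with hu
  have hktop : ν (Polynomial.hasseDeriv k (a * b)) ≠ ⊤ := hk.2.2.2
  have hνa : ν a ≠ ⊤ := small_ne_top hkey hd ha hda
  have hνb : ν b ≠ ⊤ := small_ne_top hkey hd hb hdb
  -- find the minimal term of the Leibniz expansion
  have hA : (Finset.HasAntidiagonal.antidiagonal k).Nonempty := ⟨(0, k), by simp⟩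
  obtain ⟨⟨i, j⟩, hijA, hij⟩ := Finset.exists_mem_eq_inf (Finset.HasAntidiagonal.antidiagonal k) hA
    (fun ij => ν (Polynomial.hasseDeriv ij.1 a * Polynomial.hasseDeriv ij.2 b))
  have hijk : i + j = k := Finset.HasAntidiagonal.mem_antidiagonal.1 hijA
  have hlow : ν (Polynomial.hasseDeriv i a * Polynomial.hasseDeriv j b) ≤
      ν (Polynomial.hasseDeriv k (a * b)) := by
    rw [Polynomial.hasseDeriv_mul]
    refine ν.map_le_sum fun ij hijmem => ?_
    rw [← hij]
    exact Finset.inf_le hijmem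
  have hijtop : ν (Polynomial.hasseDeriv i a) ≠ ⊤ ∧ ν (Polynomial.hasseDeriv j b) ≠ ⊤ := by
    have h1 : ν (Polynomial.hasseDeriv i a * Polynomial.hasseDeriv j b) ≠ ⊤ :=
      fun hcc => hktop (top_le_iff.1 (hcc ▸ hlow))
    rw [AddValuation.map_mul] at h1
    exact ⟨fun hc => h1 (by rw [hc, top_add]), fun hc => h1 (by rw [hc, add_top])⟩
  have hia : Polynomial.hasseDeriv i a ≠ 0 := by
    intro hcc
    exact hijtop.1 (by rw [hcc, AddValuation.map_zero])
  have hjb : Polynomial.hasseDeriv j b ≠ 0 := by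
    intro hcc
    exact hijtop.2 (by rw [hcc, AddValuation.map_zero])
  -- the main inequality in Γ
  have hmain : vg ν (a * b) - vg ν (Polynomial.hasseDeriv k (a * b)) ≤
      (vg ν a - vg ν (Polynomial.hasseDeriv i a)) +
        (vg ν b - vg ν (Polynomial.hasseDeriv j b)) := by
    have hab : vg ν (a * b) = vg ν a + vg ν b := vg_mul hνa hνb
    have hge : vg ν (Polynomial.hasseDeriv i a) + vg ν (Polynomial.hasseDeriv j b) ≤
        vg ν (Polynomial.hasseDeriv k (a * b)) := by
      have := hlow
      rw [AddValuation.map_mul, ← vg_spec (ν := ν) hijtop.1, ← vg_spec (ν := ν) hijtop.2,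
        ← vg_spec (ν := ν) hktop, ← WithTop.coe_add] at this
      exact_mod_cast this
    rw [hab]
    have := sub_le_sub_left hge (vg ν a + vg ν b)
    refine le_trans this (le_of_eq ?_)
    abel
  have hk1 : 1 ≤ k := hk.1
  -- validity helpers
  have hvalida : i ≠ 0 → ValidIdx (⇑ν) a i := by
    intro hi0
    refine ⟨by omega, ?_, hνa, hijtop.1⟩
    by_contra hcc
    push_neg at hcc
    exact hia (Polynomial.hasseDeriv_eq_zero_of_lt_natDegree a i hcc)
  have hvalidb : j ≠ 0 → ValidIdx (⇑ν) b j := by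
    intro hj0
    refine ⟨by omega, ?_, hνb, hijtop.2⟩
    by_contra hcc
    push_neg at hcc
    exact hjb (Polynomial.hasseDeriv_eq_zero_of_lt_natDegree b j hcc)
  rcases Nat.eq_zero_or_pos i with hi0 | hipos
  · -- i = 0 : the whole ratio is bounded by that of b
    subst hi0
    simp only [Nat.zero_add] at hijk
    subst hijk
    have hblt := deriv_ratio_lt hkey hd hng hm hmax hb hdb (hvalidb (by omega))
    refine lt_of_le_of_lt (nsmul_le_nsmul_right ?_ m) hblt
    refine le_trans hmain (le_of_eq ?_)
    rw [Polynomial.hasseDeriv_zero']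
    abel
  · rcases Nat.eq_zero_or_pos j with hj0 | hjpos
    · subst hj0
      simp only [Nat.add_zero] at hijk
      subst hijk
      have halt := deriv_ratio_lt hkey hd hng hm hmax ha hda (hvalida (by omega))
      refine lt_of_le_of_lt (nsmul_le_nsmul_right ?_ m) halt
      refine le_trans hmain (le_of_eq ?_)
      rw [Polynomial.hasseDeriv_zero']
      abel
    · have halt := deriv_ratio_lt hkey hd hng hm hmax ha hda (hvalida (by omega))
      have hblt := deriv_ratio_lt hkey hd hng hm hmax hb hdb (hvalidb (by omega))
      calc m • (vg ν (a * b) - vg ν (Polynomial.hasseDeriv k (a * b)))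
          ≤ m • ((vg ν a - vg ν (Polynomial.hasseDeriv i a)) +
              (vg ν b - vg ν (Polynomial.hasseDeriv j b))) := nsmul_le_nsmul_right hmain m
        _ = m • (vg ν a - vg ν (Polynomial.hasseDeriv i a)) +
              m • (vg ν b - vg ν (Polynomial.hasseDeriv j b)) := smul_add _ _ _
        _ < i • u + j • u := add_lt_add halt hblt
        _ = k • u := by rw [← add_nsmul, hijk]


/-- The core product lemma (L5'). -/
lemma key_product (hng : ¬ IsGenSupp (⇑ν) Q)
    {a b : Polynomial K} (ha : a ≠ 0) (hda : a.natDegree < Q.natDegree)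
    (hb : b ≠ 0) (hdb : b.natDegree < Q.natDegree) :
    ν ((a * b) %ₘ Q) = ν a + ν b ∧ ν a + ν b < ν ((a * b) /ₘ Q) + ν Q := by
  obtain ⟨m, hm, hmax⟩ := exists_max hkey hd hng
  have hQm : Q.Monic := hkey.1
  have hνa : ν a ≠ ⊤ := small_ne_top hkey hd ha hda
  have hνb : ν b ≠ ⊤ := small_ne_top hkey hd hb hdb
  have hνQ : ν Q ≠ ⊤ := hm.2.2.1
  have hνdm : ν (Polynomial.hasseDeriv m Q) ≠ ⊤ := hm.2.2.2
  have habtop : ν (a * b) ≠ ⊤ := by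
    rw [AddValuation.map_mul]
    exact WithTop.add_ne_top.2 ⟨hνa, hνb⟩
  suffices hmain : ν a + ν b < ν ((a * b) /ₘ Q) + ν Q by
    refine ⟨?_, hmain⟩
    have hrdef : (a * b) %ₘ Q = a * b - Q * ((a * b) /ₘ Q) :=
      modByMonic_eq_sub_mul_div _ Q
    have hlt : ν (a * b) < ν (Q * ((a * b) /ₘ Q)) := by
      rw [AddValuation.map_mul, AddValuation.map_mul, add_comm (ν Q) _]
      exact hmain
    rw [hrdef, AddValuation.map_sub_eq_of_lt_left ν hlt, AddValuation.map_mul]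
  by_contra hcon
  push_neg at hcon
  set q := (a * b) /ₘ Q with hqdef
  set r := (a * b) %ₘ Q with hrdef
  have hq0 : q ≠ 0 := by
    intro h0
    rw [h0, AddValuation.map_zero, top_add] at hcon
    rw [AddValuation.map_mul] at habtop
    exact habtop (top_le_iff.1 hcon)
  have hndab : Q.natDegree ≤ (a * b).natDegree := by
    by_contra hcc
    push_neg at hcc
    refine hq0 ?_
    rw [hqdef]
    refine (divByMonic_eq_zero_iff hQm).2 ?_
    rw [degree_eq_natDegree (mul_ne_zero ha hb), degree_eq_natDegree hQm.ne_zero]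
    exact_mod_cast hcc
  have hndq : q.natDegree < Q.natDegree := by
    have h1 : q.natDegree = (a * b).natDegree - Q.natDegree := natDegree_divByMonic _ hQm
    have h2 : (a * b).natDegree = a.natDegree + b.natDegree := natDegree_mul ha hb
    omega
  have hνq : ν q ≠ ⊤ := small_ne_top hkey hd hq0 hndq
  have hνr : ν q + ν Q ≤ ν r := by
    have hr2 : r = a * b - Q * q := modByMonic_eq_sub_mul_div _ Q
    rw [hr2]
    refine AddValuation.map_le_sub ν ?_ ?_
    · rw [AddValuation.map_mul]
      exact hcon
    · rw [AddValuation.map_mul, add_comm]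
  -- notation for the Γ-level quantities
  set vQ : Γ := vg ν Q with hvQ
  set vdm : Γ := vg ν (Polynomial.hasseDeriv m Q) with hvdm
  set vq : Γ := vg ν q with hvq
  set u : Γ := vQ - vdm with hudef
  -- decomposition of the Hasse derivative
  have hab_decomp : a * b = r + Q * q := (modByMonic_add_div _ Q).symm
  have hD : Polynomial.hasseDeriv m (a * b) =
      Polynomial.hasseDeriv m Q * q +
        ((∑ ij ∈ (Finset.HasAntidiagonal.antidiagonal m).erase (m, 0),
          Polynomial.hasseDeriv ij.1 Q * Polynomial.hasseDeriv ij.2 q) +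
            Polynomial.hasseDeriv m r) := by
    conv_lhs => rw [hab_decomp]
    rw [map_add, Polynomial.hasseDeriv_mul,
      ← Finset.add_sum_erase _ _ (show ((m, 0) : ℕ × ℕ) ∈ Finset.HasAntidiagonal.antidiagonal m by simp),
      Polynomial.hasseDeriv_zero']
    ring
  -- bounds for all the non-principal terms
  have hterm : ∀ ij ∈ (Finset.HasAntidiagonal.antidiagonal m).erase (m, 0),
      ((vq + vdm : Γ) : WithTop Γ) <
        ν (Polynomial.hasseDeriv ij.1 Q * Polynomial.hasseDeriv ij.2 q) := by
    rintro ⟨j, i⟩ hmem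
    have hmem' := Finset.mem_of_mem_erase hmem
    have hne : ((j, i) : ℕ × ℕ) ≠ (m, 0) := Finset.ne_of_mem_erase hmem
    have hji : j + i = m := Finset.HasAntidiagonal.mem_antidiagonal.1 hmem'
    have hipos : 1 ≤ i := by
      rcases Nat.eq_zero_or_pos i with h0 | h
      · exfalso; apply hne; rw [h0]; rw [h0, Nat.add_zero] at hji; rw [hji]
      · omega
    rcases eq_or_ne (Polynomial.hasseDeriv i q) 0 with hz | hz
    · rw [hz, mul_zero, AddValuation.map_zero]; exact WithTop.coe_lt_top _
    rcases eq_or_ne (Polynomial.hasseDeriv j Q) 0 with hzQ | hzQ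
    · rw [hzQ, zero_mul, AddValuation.map_zero]; exact WithTop.coe_lt_top _
    have hndiq : (Polynomial.hasseDeriv i q).natDegree < Q.natDegree :=
      lt_of_le_of_lt (le_trans (Polynomial.natDegree_hasseDeriv_le q i) (Nat.sub_le _ _)) hndq
    have hνdiq : ν (Polynomial.hasseDeriv i q) ≠ ⊤ := small_ne_top hkey hd hz hndiq
    have hiledq : i ≤ q.natDegree := by
      by_contra hcc
      push_neg at hcc
      exact hz (Polynomial.hasseDeriv_eq_zero_of_lt_natDegree q i hcc)
    have hνdjQ : ν (Polynomial.hasseDeriv j Q) ≠ ⊤ := by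
      rcases Nat.eq_zero_or_pos j with h0 | hj
      · rw [h0, Polynomial.hasseDeriv_zero']; exact hνQ
      · refine small_ne_top hkey hd hzQ ?_
        have := Polynomial.natDegree_hasseDeriv_le Q j
        omega
    -- Q-side estimate
    have hQj : m • (vQ - vg ν (Polynomial.hasseDeriv j Q)) ≤ j • u := by
      rcases Nat.eq_zero_or_pos j with h0 | hj
      · rw [h0, Polynomial.hasseDeriv_zero']
        simp [hvQ]
      · have hjle : j ≤ Q.natDegree := by
          have h1 : m ≤ Q.natDegree := hm.2.1
          omega
        exact hmax j ⟨hj, hjle, hνQ, hνdjQ⟩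
    -- q-side estimate
    have hSq : m • (vq - vg ν (Polynomial.hasseDeriv i q)) < i • u :=
      deriv_ratio_lt hkey hd hng hm hmax hq0 hndq ⟨hipos, hiledq, hνq, hνdiq⟩
    -- combine
    have hsum : m • ((vq - vg ν (Polynomial.hasseDeriv i q)) +
        (vQ - vg ν (Polynomial.hasseDeriv j Q))) < m • u := by
      rw [smul_add]
      calc m • (vq - vg ν (Polynomial.hasseDeriv i q)) +
            m • (vQ - vg ν (Polynomial.hasseDeriv j Q))
          < i • u + j • u := add_lt_add_of_lt_of_le hSq hQj
        _ = (i + j) • u := (add_nsmul _ _ _).symm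
        _ = m • u := by rw [Nat.add_comm i j, hji]
    have hgl : (vq - vg ν (Polynomial.hasseDeriv i q)) +
        (vQ - vg ν (Polynomial.hasseDeriv j Q)) < u := lt_of_nsmul_lt_nsmul_right m hsum
    have hgoal : vq + vdm < vg ν (Polynomial.hasseDeriv j Q) +
        vg ν (Polynomial.hasseDeriv i q) := by
      have h3 : (vq - vg ν (Polynomial.hasseDeriv i q)) +
          (vQ - vg ν (Polynomial.hasseDeriv j Q)) =
            (vq + vQ) - (vg ν (Polynomial.hasseDeriv i q) +
              vg ν (Polynomial.hasseDeriv j Q)) := by abel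
      rw [h3, hudef, sub_lt_sub_iff] at hgl
      have h4 : vQ + (vq + vdm) ≤ vq + vQ + vdm := le_of_eq (by abel)
      have h5 := lt_of_le_of_lt h4 hgl
      have := lt_of_add_lt_add_left h5
      calc vq + vdm < vg ν (Polynomial.hasseDeriv i q) +
            vg ν (Polynomial.hasseDeriv j Q) := this
        _ = vg ν (Polynomial.hasseDeriv j Q) + vg ν (Polynomial.hasseDeriv i q) := by abel
    have hval : ν (Polynomial.hasseDeriv j Q * Polynomial.hasseDeriv i q) =
        ((vg ν (Polynomial.hasseDeriv j Q) + vg ν (Polynomial.hasseDeriv i q) : Γ) :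
          WithTop Γ) := by
      rw [AddValuation.map_mul, ← vg_spec (ν := ν) hνdjQ, ← vg_spec (ν := ν) hνdiq,
        WithTop.coe_add]
    rw [hval]
    exact_mod_cast hgoal
  -- bound for the remainder term
  have hrterm : ((vq + vdm : Γ) : WithTop Γ) < ν (Polynomial.hasseDeriv m r) := by
    rcases eq_or_ne (Polynomial.hasseDeriv m r) 0 with hz | hz
    · rw [hz, AddValuation.map_zero]; exact WithTop.coe_lt_top _
    have hr0 : r ≠ 0 := by
      intro h0
      exact hz (by rw [h0, map_zero])
    have hndr : r.natDegree < Q.natDegree := by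
      have hdm := degree_modByMonic_lt (a * b) hQm
      rw [← hrdef] at hdm
      rw [degree_eq_natDegree hr0, degree_eq_natDegree hQm.ne_zero] at hdm
      exact_mod_cast hdm
    have hνrt : ν r ≠ ⊤ := small_ne_top hkey hd hr0 hndr
    have hνdmr : ν (Polynomial.hasseDeriv m r) ≠ ⊤ :=
      small_ne_top hkey hd hz (lt_of_le_of_lt
        (le_trans (Polynomial.natDegree_hasseDeriv_le r m) (Nat.sub_le _ _)) hndr)
    have hmler : m ≤ r.natDegree := by
      by_contra hcc
      push_neg at hcc
      exact hz (Polynomial.hasseDeriv_eq_zero_of_lt_natDegree r m hcc)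
    have hBr := deriv_ratio_lt hkey hd hng hm hmax hr0 hndr ⟨hm.1, hmler, hνrt, hνdmr⟩
    have h5 : vg ν r - vg ν (Polynomial.hasseDeriv m r) < u :=
      lt_of_nsmul_lt_nsmul_right m hBr
    have h6 : vq + vQ ≤ vg ν r := by
      have := hνr
      rw [← vg_spec (ν := ν) hνq, ← vg_spec (ν := ν) hνQ, ← vg_spec (ν := ν) hνrt,
        ← WithTop.coe_add] at this
      exact_mod_cast this
    rw [hudef, sub_lt_sub_iff] at h5
    -- h5 : vg r + vdm < vQ + vg ∂m r
    have h7 : vQ + (vq + vdm) < vQ + vg ν (Polynomial.hasseDeriv m r) := by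
      calc vQ + (vq + vdm) = (vq + vQ) + vdm := by abel
        _ ≤ vg ν r + vdm := add_le_add_left h6 _
        _ < vQ + vg ν (Polynomial.hasseDeriv m r) := h5
    have h8 := lt_of_add_lt_add_left h7
    rw [← vg_spec (ν := ν) hνdmr]
    exact_mod_cast h8
  -- value of the Hasse derivative of `a * b`
  have hMain : ν (Polynomial.hasseDeriv m Q * q) = ((vdm + vq : Γ) : WithTop Γ) := by
    rw [AddValuation.map_mul, ← vg_spec (ν := ν) hνdm, ← vg_spec (ν := ν) hνq,
      WithTop.coe_add]
  have hrest : ((vq + vdm : Γ) : WithTop Γ) <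
      ν ((∑ ij ∈ (Finset.HasAntidiagonal.antidiagonal m).erase (m, 0),
        Polynomial.hasseDeriv ij.1 Q * Polynomial.hasseDeriv ij.2 q) +
          Polynomial.hasseDeriv m r) :=
    AddValuation.map_lt_add ν (ν.map_lt_sum WithTop.coe_ne_top hterm) hrterm
  have hDval : ν (Polynomial.hasseDeriv m (a * b)) = ((vq + vdm : Γ) : WithTop Γ) := by
    rw [hD, AddValuation.map_add_eq_of_lt_left ν (by rw [hMain, add_comm vdm vq]; exact hrest),
      hMain, add_comm vdm vq]
  -- contradiction with `prod_ratio_lt`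
  have hvalab : ValidIdx (⇑ν) (a * b) m :=
    ⟨hm.1, le_trans hm.2.1 hndab, habtop, by rw [hDval]; exact WithTop.coe_ne_top⟩
  have hfinal := prod_ratio_lt hkey hd hng hm hmax ha hda hb hdb hvalab
  have hvab : vg ν (a * b) = vg ν a + vg ν b := vg_mul hνa hνb
  have hvdmab : vg ν (Polynomial.hasseDeriv m (a * b)) = vq + vdm := vg_eq (ν := ν) hDval
  have h7 : vq + vQ ≤ vg ν a + vg ν b := by
    have := hcon
    rw [← vg_spec (ν := ν) hνq, ← vg_spec (ν := ν) hνQ, ← vg_spec (ν := ν) hνa,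
      ← vg_spec (ν := ν) hνb, ← WithTop.coe_add, ← WithTop.coe_add] at this
    exact_mod_cast this
  have h8 : u ≤ vg ν (a * b) - vg ν (Polynomial.hasseDeriv m (a * b)) := by
    rw [hvab, hvdmab, hudef]
    rw [sub_le_sub_iff]
    calc vQ + (vq + vdm) = (vq + vQ) + vdm := by abel
      _ ≤ (vg ν a + vg ν b) + vdm := add_le_add_left h7 _
  exact absurd hfinal (not_lt.2 (nsmul_le_nsmul_right h8 m))


end KeyTheory

end Stmt10Aux

open Stmt10Aux

/-- If `ν(Q^e) = ν(h)` with `deg h < deg Q`, then the residue of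
`r = Q^e/h` under `ν_Q` is transcendental over `Kν` : whenever `a_0,…,a_s` have
nonnegative value and the residue of `Σ a_i r^i` vanishes (equivalently
`ν_Q(Σ a_i Q^{ei} h^{s-i}) > ν_Q(h^s)`), all the residues `a_iν` vanish. -/
theorem stmt10 (ν : AddValuation (Polynomial K) (WithTop Γ)) (Q : Polynomial K)
    (hQ : IsKeyPoly (⇑ν) Q) (e : ℕ) (he : 0 < e) (h : Polynomial K) (hh : h ≠ 0)
    (hdeg : h.natDegree < Q.natDegree) (hval : ν (Q ^ e) = ν h) :
    ∀ (s : ℕ) (b : ℕ → K), (∀ i, i ≤ s → 0 ≤ ν (C (b i))) →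
      trunc (⇑ν) Q (h ^ s) <
        trunc (⇑ν) Q (∑ i ∈ Finset.range (s + 1), C (b i) * Q ^ (e * i) * h ^ (s - i)) →
      ∀ i, i ≤ s → 0 < ν (C (b i)) := by
  have hQm : Q.Monic := hQ.1
  have hd : 1 ≤ Q.natDegree := Nat.lt_of_le_of_lt (Nat.zero_le _) hdeg
  have hνh : ν h ≠ ⊤ := small_ne_top hQ hd hh hdeg
  have hng : ¬ IsGenSupp (⇑ν) Q := by
    intro hgs
    have hQe : ν (Q ^ e) = ⊤ := (hgs _).2 (dvd_pow_self Q he.ne')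
    rw [hval] at hQe
    exact hνh hQe
  have hνQ : ν Q ≠ ⊤ := by
    intro h0
    have hQe : ν (Q ^ e) = ⊤ := by
      have : Q ^ e = Q * Q ^ (e - 1) := by
        rw [← pow_succ']
        congr 1
        omega
      rw [this, AddValuation.map_mul, h0, top_add]
    rw [hval] at hQe
    exact hνh hQe
  have hL5 : ∀ a b : Polynomial K, a ≠ 0 → a.natDegree < Q.natDegree →
      b ≠ 0 → b.natDegree < Q.natDegree →
      ν ((a * b) %ₘ Q) = ν a + ν b ∧ ν a + ν b < ν ((a * b) /ₘ Q) + ν Q :=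
    fun a b ha hda hb hdb => key_product hQ hd hng ha hda hb hdb
  have hM : ∀ f : Polynomial K, trunc (⇑ν) Q (h * f) = ν h + trunc (⇑ν) Q f :=
    fun f => trunc_mul_small ν hQm hd hνQ hL5 hh hdeg f.natDegree f le_rfl
  have htruncpow : ∀ k : ℕ, trunc (⇑ν) Q (h ^ k) = k • ν h := by
    intro k
    induction k with
    | zero =>
        rw [pow_zero, trunc_of_degree_lt ν hQm hd (by rw [natDegree_one]; omega),
          AddValuation.map_one, zero_nsmul]
    | succ k ihk =>
        rw [pow_succ', hM, ihk, succ_nsmul']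
  have hQpow : ∀ k : ℕ, ν (Q ^ (e * k)) = k • ν h := by
    intro k
    rw [pow_mul, AddValuation.map_pow, hval]
  obtain ⟨γ, hγ⟩ : ∃ γ : Γ, ν h = ↑γ := Option.ne_none_iff_exists'.mp hνh
  have hsnetop : ∀ k : ℕ, (k • ν h : WithTop Γ) ≠ ⊤ := by
    intro k
    rw [hγ, ← WithTop.coe_nsmul]
    exact WithTop.coe_ne_top
  intro s
  induction s with
  | zero =>
      intro b hb hlt i hi
      interval_cases i
      have h1 : trunc (⇑ν) Q (h ^ 0) = 0 := by rw [htruncpow, zero_nsmul]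
      have h2 : (∑ i ∈ Finset.range (0 + 1), C (b i) * Q ^ (e * i) * h ^ (0 - i)) =
          C (b 0) := by
        rw [Finset.sum_range_one]
        simp
      rw [h1, h2] at hlt
      have h3 : trunc (⇑ν) Q (C (b 0)) = ν (C (b 0)) :=
        trunc_of_degree_lt ν hQm hd (by rw [natDegree_C]; omega)
      rwa [h3] at hlt
  | succ s ih =>
      intro b hb hlt
      set S : Polynomial K :=
        ∑ i ∈ Finset.range (s + 1 + 1), C (b i) * Q ^ (e * i) * h ^ (s + 1 - i) with hS
      set T : Polynomial K :=
        ∑ i ∈ Finset.range (s + 1), C (b i) * Q ^ (e * i) * h ^ (s - i) with hT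
      have hsplit : S = h * T + Q ^ (e * (s + 1)) * C (b (s + 1)) := by
        rw [hS, Finset.sum_range_succ, hT, Finset.mul_sum]
        congr 1
        · refine Finset.sum_congr rfl fun i hi => ?_
          have hi' : i ≤ s := Nat.lt_succ_iff.1 (Finset.mem_range.1 hi)
          have hsub : s + 1 - i = (s - i) + 1 := by omega
          rw [hsub, pow_succ']
          ring
        · have : s + 1 - (s + 1) = 0 := by omega
          rw [this, pow_zero, mul_one, mul_comm]
      have hdegbound : (h * T).natDegree < e * (s + 1) * Q.natDegree := by
        have hrep : h * T = ∑ i ∈ Finset.range (s + 1),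
            C (b i) * Q ^ (e * i) * h ^ (s + 1 - i) := by
          rw [hT, Finset.mul_sum]
          refine Finset.sum_congr rfl fun i hi => ?_
          have hi' : i ≤ s := Nat.lt_succ_iff.1 (Finset.mem_range.1 hi)
          have hsub : s + 1 - i = (s - i) + 1 := by omega
          rw [hsub, pow_succ']
          ring
        have hkey : ∀ i, i ≤ s →
            e * i * Q.natDegree + (s + 1 - i) * h.natDegree + 1 ≤
              e * (s + 1) * Q.natDegree := by
          intro i hi
          have h1 : (s + 1 - i) * h.natDegree + 1 ≤ (s + 1 - i) * Q.natDegree := by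
            have h2 : (s + 1 - i) * h.natDegree < (s + 1 - i) * Q.natDegree :=
              mul_lt_mul_of_pos_left hdeg (by omega : 0 < s + 1 - i)
            omega
          have h3 : (s + 1 - i) * Q.natDegree ≤ e * (s + 1 - i) * Q.natDegree := by
            have := Nat.le_mul_of_pos_left (s + 1 - i) he
            exact Nat.mul_le_mul_right _ this
          have h4 : e * i * Q.natDegree + e * (s + 1 - i) * Q.natDegree =
              e * (s + 1) * Q.natDegree := by
            rw [← Nat.add_mul, ← Nat.mul_add]
            congr 2
            omega
          omega
        have hsumbound : (h * T).natDegree ≤ e * (s + 1) * Q.natDegree - 1 := by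
          rw [hrep]
          refine natDegree_sum_le_of_forall_le _ _ fun i hi => ?_
          have hi' : i ≤ s := Nat.lt_succ_iff.1 (Finset.mem_range.1 hi)
          have hb1 : (C (b i) * Q ^ (e * i) * h ^ (s + 1 - i)).natDegree ≤
              (C (b i) * Q ^ (e * i)).natDegree + (h ^ (s + 1 - i)).natDegree :=
            natDegree_mul_le
          have hb2 : (C (b i) * Q ^ (e * i)).natDegree ≤
              (C (b i)).natDegree + (Q ^ (e * i)).natDegree := natDegree_mul_le
          have hb3 : (Q ^ (e * i)).natDegree = e * i * Q.natDegree := hQm.natDegree_pow _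
          have hb4 : (h ^ (s + 1 - i)).natDegree ≤ (s + 1 - i) * h.natDegree :=
            natDegree_pow_le
          have hb5 := hkey i hi'
          rw [natDegree_C] at hb2
          omega
        have hpos : 1 ≤ e * (s + 1) * Q.natDegree := by
          have : 1 * 1 * 1 ≤ e * (s + 1) * Q.natDegree :=
            Nat.mul_le_mul (Nat.mul_le_mul he (by omega)) hd
          omega
        omega
      have huni := div_modByMonic_unique (C (b (s + 1))) (h * T) (hQm.pow (e * (s + 1)))
        ⟨by rw [← hsplit], degree_lt_pow hQm hd hdegbound⟩
      have hqCS : qCoeff Q S (e * (s + 1)) = C (b (s + 1)) := by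
        rw [qCoeff_eq hQm, huni.1]
        refine (modByMonic_eq_self_iff hQm).2 ?_
        refine lt_of_le_of_lt degree_C_le ?_
        rw [degree_eq_natDegree hQm.ne_zero]
        exact_mod_cast hd
      have hub : trunc (⇑ν) Q S ≤ ν (C (b (s + 1))) + (s + 1) • ν h := by
        have := trunc_le ν hQm hd S (e * (s + 1))
        rwa [hqCS, AddValuation.map_mul, hQpow (s + 1)] at this
      rw [htruncpow (s + 1)] at hlt
      -- first conclusion : positive value of the top coefficient
      have hbtop : 0 < ν (C (b (s + 1))) := by
        have h1 : (0 : WithTop Γ) + (s + 1) • ν h < ν (C (b (s + 1))) + (s + 1) • ν h := by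
          rw [zero_add]
          exact lt_of_lt_of_le hlt hub
        exact (WithTop.add_lt_add_iff_right (hsnetop (s + 1))).1 h1
      -- the remaining coefficients via the induction hypothesis
      have htCb : (s + 1) • ν h < trunc (⇑ν) Q (Q ^ (e * (s + 1)) * C (b (s + 1))) := by
        rw [mul_comm, trunc_C_mul_pow ν hQm hd, AddValuation.map_mul, hQpow (s + 1)]
        have h1 : (0 : WithTop Γ) + (s + 1) • ν h < ν (C (b (s + 1))) + (s + 1) • ν h :=
          (WithTop.add_lt_add_iff_right (hsnetop (s + 1))).2 hbtop
        rwa [zero_add] at h1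
      have hhT : (s + 1) • ν h < trunc (⇑ν) Q (h * T) := by
        have hsub : h * T = S - Q ^ (e * (s + 1)) * C (b (s + 1)) := by
          rw [hsplit]; ring
        rw [hsub]
        refine lt_of_lt_of_le (lt_min hlt htCb) (trunc_sub_ge ν hQm hd _ _)
      have hTbound : trunc (⇑ν) Q (h ^ s) < trunc (⇑ν) Q T := by
        rw [htruncpow s]
        have h1 : ν h + s • ν h < ν h + trunc (⇑ν) Q T := by
          rw [← succ_nsmul']
          rwa [hM T] at hhT
        exact (WithTop.add_lt_add_iff_left hνh).1 h1
      have hrest := ih b (fun i hi => hb i (by omega)) hTbound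
      intro i hi
      rcases Nat.lt_succ_iff_lt_or_eq.1 (Nat.lt_succ_of_le hi) with hi' | rfl
      · exact hrest i (by omega)
      · exact hbtop
end

section
/- Let ν be a Krull valuation on K[x], μ an extension to K̄[x], f ∈ K[x] non-constant with optimizing root a ∈ K̄. Then ν(f) lies in the value group μK̄ if and only if δ(f) = μ(x−a) lies in μK̄. -/
open Polynomial

variable {K : Type*} [Field K] {Γ : Type*} [AddCommGroup Γ] [LinearOrder Γ] [IsOrderedAddMonoid Γ]

private lemma coe_nsmul_withTop (n : ℕ) (g : Γ) :
    ((n • g : Γ) : WithTop Γ) = n • (g : WithTop Γ) := by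
  induction n with
  | zero => simp
  | succ n ih => rw [succ_nsmul, succ_nsmul, WithTop.coe_add, ih]

/-- For `f ∈ K[x]` with optimizing root `a`, `ν(f) ∈ μK̄` iff
`δ(f) = μ(x-a) ∈ μK̄`. -/
theorem stmt11 {L : Type*} [Field L] [Algebra K L] [IsAlgClosure K L]
    (ν : AddValuation (Polynomial K) (WithTop Γ)) (μ : AddValuation (Polynomial L) (WithTop Γ))
    (hKrull : ∀ p : Polynomial K, p ≠ 0 → ν p ≠ ⊤)
    (hext : ∀ p : Polynomial K, ν p = μ (p.map (algebraMap K L)))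
    (f : Polynomial K) (hf : 0 < f.natDegree)
    (a : L) (ha : Polynomial.aeval a f = 0)
    (hopt : ∀ b : L, Polynomial.aeval b f = 0 → μ (X - C b) ≤ μ (X - C a)) :
    (∃ c : L, c ≠ 0 ∧ ν f = μ (C c)) ↔ (∃ c : L, c ≠ 0 ∧ μ (X - C a) = μ (C c)) := by
  haveI : IsAlgClosed L := IsAlgClosure.isAlgClosed K
  have hF : f ≠ 0 := fun h => by simp [h] at hf
  set φ : K →+* L := algebraMap K L with hφdef
  set fL : Polynomial L := f.map φ with hfLdef
  have hfL : fL ≠ 0 := Polynomial.map_ne_zero hF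
  set δ : WithTop Γ := μ (X - C a) with hδdef
  -- basic facts about values of constants
  have hCmul : ∀ c d : L, μ (C (c * d)) = μ (C c) + μ (C d) := fun c d => by
    rw [C_mul, μ.map_mul]
  have hCne : ∀ c : L, c ≠ 0 → μ (C c) ≠ ⊤ := by
    intro c hc h
    have h1 : μ (C c * C c⁻¹) = μ 1 := by rw [← C_mul, mul_inv_cancel₀ hc, C_1]
    rw [μ.map_mul, μ.map_one, h, top_add] at h1
    simp at h1
  -- per-root dichotomy
  have hroot : ∀ b : L, Polynomial.aeval b f = 0 →
      μ (X - C b) = δ ∨ ∃ c : L, c ≠ 0 ∧ μ (X - C b) = μ (C c) := by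
    intro b hb
    by_cases hab : b = a
    · left; rw [hab]
    · have hx : (X - C b : Polynomial L) = (X - C a) + C (a - b) := by
        rw [C_sub]; ring
      rcases lt_trichotomy (μ (C (a - b))) δ with h | h | h
      · right
        refine ⟨a - b, sub_ne_zero.mpr fun h' => hab h'.symm, ?_⟩
        rw [hx, μ.map_add_eq_of_lt_right h]
      · left
        have h1 : δ ≤ μ (X - C b) := by
          rw [hx]
          exact μ.map_le_add le_rfl h.ge
        exact le_antisymm (hopt b hb) h1
      · left
        have h1 : δ ≤ μ (X - C b) := by
          rw [hx]
          exact μ.map_le_add le_rfl h.le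
        exact le_antisymm (hopt b hb) h1
  -- every element of the root multiset is a root of f
  have hmemroot : ∀ b ∈ fL.roots, Polynomial.aeval b f = 0 := by
    intro b hb
    have := (Polynomial.mem_roots hfL).mp hb
    rwa [Polynomial.IsRoot, hfLdef, Polynomial.eval_map, ← Polynomial.aeval_def] at this
  -- a is in the root multiset
  have haroot : a ∈ fL.roots := by
    rw [Polynomial.mem_roots hfL, Polynomial.IsRoot, hfLdef, Polynomial.eval_map,
      ← Polynomial.aeval_def]
    exact ha
  -- the sum lemma by multiset induction
  have hsum : ∀ S : Multiset L, (∀ b ∈ S, Polynomial.aeval b f = 0) →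
      ∃ (k : ℕ) (c : L), c ≠ 0 ∧
        (S.map fun b => μ (X - C b)).sum = k • δ + μ (C c) := by
    intro S
    induction S using Multiset.induction_on with
    | empty => intro _; exact ⟨0, 1, one_ne_zero, by simp [μ.map_one]⟩
    | cons b S ih =>
      intro hS
      obtain ⟨k, c, hc, hkc⟩ := ih fun x hx => hS x (Multiset.mem_cons_of_mem hx)
      rcases hroot b (hS b (Multiset.mem_cons_self b S)) with h | ⟨c', hc', h⟩
      · refine ⟨k + 1, c, hc, ?_⟩
        rw [Multiset.map_cons, Multiset.sum_cons, hkc, h, succ_nsmul']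
        rw [add_assoc]
      · refine ⟨k, c' * c, mul_ne_zero hc' hc, ?_⟩
        rw [Multiset.map_cons, Multiset.sum_cons, hkc, h, hCmul, add_left_comm]
  -- main decomposition: ν f = (k+1) • δ + μ (C c₀)
  obtain ⟨R, hR⟩ := Multiset.exists_cons_of_mem haroot
  have hfact : fL = C fL.leadingCoeff * ((fL.roots.map fun b => X - C b).prod) :=
    (IsAlgClosed.splits fL).eq_prod_roots
  have hlc : fL.leadingCoeff ≠ 0 := Polynomial.leadingCoeff_ne_zero.mpr hfL
  obtain ⟨k, c, hc, hkc⟩ := hsum R fun b hb =>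
    hmemroot b (by rw [hR]; exact Multiset.mem_cons_of_mem hb)
  have hprodval : ∀ S : Multiset L,
      μ ((S.map fun b => X - C b).prod) = (S.map fun b => μ (X - C b)).sum := by
    intro S
    induction S using Multiset.induction_on with
    | empty => simp [μ.map_one]
    | cons b S ih =>
      rw [Multiset.map_cons, Multiset.prod_cons, Multiset.map_cons, Multiset.sum_cons,
        μ.map_mul, ih]
  have hδa : μ (X - C a) = δ := rfl
  have hdec : ν f = (k + 1) • δ + μ (C (fL.leadingCoeff * c)) := by
    rw [hext f, ← hfLdef]
    conv_lhs => rw [hfact]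
    rw [μ.map_mul, hprodval, hR, Multiset.map_cons, Multiset.sum_cons, hδa, hkc, hCmul,
      succ_nsmul']
    simp only [add_assoc, add_left_comm, add_comm]
  set c₀ : L := fL.leadingCoeff * c with hc₀def
  have hc₀ : c₀ ≠ 0 := mul_ne_zero hlc hc
  have hδtop : δ ≠ ⊤ := by
    intro h
    apply hKrull f hF
    rw [hdec, h]
    rw [succ_nsmul, add_top, top_add]
  constructor
  · rintro ⟨c', hc', hν⟩
    have hcancel : μ (C c₀) + μ (C c₀⁻¹) = 0 := by
      rw [← hCmul, mul_inv_cancel₀ hc₀, C_1, μ.map_one]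
    have h1 : (k + 1) • δ = μ (C (c' * c₀⁻¹)) := by
      rw [hCmul, ← hν, hdec, add_assoc, hcancel, add_zero]
    obtain ⟨d, hd⟩ := IsAlgClosed.exists_pow_nat_eq (c' * c₀⁻¹) (Nat.succ_pos k)
    have hd0 : d ≠ 0 := by
      intro h
      apply mul_ne_zero hc' (inv_ne_zero hc₀)
      rw [← hd, h, zero_pow (Nat.succ_ne_zero k)]
    have h2 : (k + 1) • δ = (k + 1) • μ (C d) := by
      rw [h1, ← hd, C_pow, μ.map_pow]
    obtain ⟨g, hg⟩ := WithTop.ne_top_iff_exists.mp hδtop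
    obtain ⟨h, hh⟩ := WithTop.ne_top_iff_exists.mp (hCne d hd0)
    rw [← hg, ← hh, ← coe_nsmul_withTop, ← coe_nsmul_withTop] at h2
    have h3 : g = h :=
      (nsmul_right_strictMono (Nat.succ_ne_zero k)).injective (WithTop.coe_injective h2)
    exact ⟨d, hd0, by rw [← hg, ← hh]; exact_mod_cast h3⟩
  · rintro ⟨c', hc', hδeq⟩
    refine ⟨c' ^ (k + 1) * c₀, mul_ne_zero (pow_ne_zero _ hc') hc₀, ?_⟩
    rw [hdec, hδeq, hCmul (c' ^ (k + 1)) c₀, C_pow, μ.map_pow]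
end

section
/- Let ν be a valuation on K[x]. Suppose there exist q ∈ K[x] and a ∈ K such that the residue ξ of q/a under ν (extended to K(x)) is transcendental over the residue field Kν. Then for all a_0,...,a_s ∈ K, ν(a_0 + a_1 q + ... + a_s q^s) = min_{0≤i≤s} ν(a_i q^i). -/
open Polynomial

variable {K : Type*} [Field K] {Γ : Type*} [AddCommGroup Γ] [LinearOrder Γ] [IsOrderedAddMonoid Γ]

/-- If the residue of `q/a` under `ν` is transcendental over `Kν`
(encoded: whenever `b_0,…,b_s` have nonnegative value and
`ν(Σ b_i q^i a^{s-i}) > ν(a^s)`, all residues `b_iν` vanish), then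
`ν(Σ c_i q^i) = min_i ν(c_i q^i)` for all `c_0,…,c_s ∈ K`. -/
theorem stmt12 (ν : AddValuation (Polynomial K) (WithTop Γ)) (q : Polynomial K) (a : K)
    (ha : a ≠ 0) (hval : ν q = ν (C a))
    (htr : ∀ (s : ℕ) (b : ℕ → K), (∀ i, i ≤ s → 0 ≤ ν (C (b i))) →
      ν ((C a) ^ s) <
        ν (∑ i ∈ Finset.range (s + 1), C (b i) * q ^ i * (C a) ^ (s - i)) →
      ∀ i, i ≤ s → 0 < ν (C (b i))) :
    ∀ (s : ℕ) (c : ℕ → K),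
      ν (∑ i ∈ Finset.range (s + 1), C (c i) * q ^ i) =
        (Finset.range (s + 1)).inf fun i => ν (C (c i) * q ^ i) := by
  intro s c
  have hCne : ∀ (x : K), x ≠ 0 → ν (C x) ≠ ⊤ := by
    intro x hx h
    have h2 := ν.map_mul (C x) (C x⁻¹)
    rw [← C_mul, mul_inv_cancel₀ hx, C_1, ν.map_one, h] at h2
    simp at h2
  have hterm : ∀ i, ν (C (c i) * q ^ i) = ν (C (c i * a ^ i)) := by
    intro i
    rw [C_mul, C_pow, ν.map_mul, ν.map_mul, ν.map_pow, ν.map_pow, hval]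
  obtain ⟨j, hjmem, hj⟩ := Finset.exists_mem_eq_inf (Finset.range (s + 1))
    (by simp) (fun i => ν (C (c i) * q ^ i))
  have hjs : j ≤ s := Nat.lt_succ_iff.mp (Finset.mem_range.mp hjmem)
  rw [hj]
  by_cases hcj : c j = 0
  · have hci : ∀ i ∈ Finset.range (s + 1), c i = 0 := by
      intro i hi
      by_contra hne
      have h1 : ν (C (c j) * q ^ j) ≤ ν (C (c i) * q ^ i) := hj ▸ Finset.inf_le hi
      rw [hcj] at h1
      simp only [C_0, zero_mul, ν.map_zero, top_le_iff] at h1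
      exact hCne _ (mul_ne_zero hne (pow_ne_zero _ ha)) ((hterm i) ▸ h1)
    rw [Finset.sum_eq_zero (fun i hi => by rw [hci i hi]; simp)]
    rw [hcj]
    simp [ν.map_zero]
  · have hge : ν (C (c j) * q ^ j) ≤ ν (∑ i ∈ Finset.range (s + 1), C (c i) * q ^ i) :=
      ν.map_le_sum (fun i hi => hj ▸ Finset.inf_le hi)
    rcases eq_or_lt_of_le hge with h | hlt
    · exact h.symm
    exfalso
    set b : ℕ → K := fun i => c i * a ^ i / (c j * a ^ j) with hb
    have hDne : (c j * a ^ j) ≠ 0 := mul_ne_zero hcj (pow_ne_zero _ ha)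
    have hD : ν (C (c j * a ^ j)) ≠ ⊤ := hCne _ hDne
    have hbval : ∀ i, ν (C (b i)) + ν (C (c j * a ^ j)) = ν (C (c i * a ^ i)) := by
      intro i
      rw [← ν.map_mul, ← C_mul, hb]
      simp only
      rw [div_mul_cancel₀ _ hDne]
    have hb0 : ∀ i, i ≤ s → 0 ≤ ν (C (b i)) := by
      intro i hi
      have h1 : ν (C (c j) * q ^ j) ≤ ν (C (c i) * q ^ i) :=
        hj ▸ Finset.inf_le (Finset.mem_range.mpr (Nat.lt_succ_of_le hi))
      rw [hterm, hterm, ← hbval i] at h1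
      have h2 : (0 : WithTop Γ) + ν (C (c j * a ^ j)) ≤ ν (C (b i)) + ν (C (c j * a ^ j)) := by
        rwa [zero_add]
      exact (WithTop.add_le_add_iff_right hD).mp h2
    have hid : C (c j * a ^ j) * (∑ i ∈ Finset.range (s + 1), C (b i) * q ^ i * C a ^ (s - i))
        = C a ^ s * ∑ i ∈ Finset.range (s + 1), C (c i) * q ^ i := by
      rw [Finset.mul_sum, Finset.mul_sum]
      refine Finset.sum_congr rfl fun i hi => ?_
      have his : i ≤ s := Nat.lt_succ_iff.mp (Finset.mem_range.mp hi)
      have hkey : C (c j * a ^ j) * C (b i) = C (c i * a ^ i) := by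
        rw [← C_mul, hb]
        simp only
        rw [mul_div_cancel₀ _ hDne]
      calc C (c j * a ^ j) * (C (b i) * q ^ i * C a ^ (s - i))
          = (C (c j * a ^ j) * C (b i)) * q ^ i * C a ^ (s - i) := by ring
        _ = C (c i * a ^ i) * q ^ i * C a ^ (s - i) := by rw [hkey]
        _ = C a ^ (i + (s - i)) * (C (c i) * q ^ i) := by rw [C_mul, C_pow, pow_add]; ring
        _ = C a ^ s * (C (c i) * q ^ i) := by rw [Nat.add_sub_cancel' his]
    have hv : ν (C (c j * a ^ j)) + ν (∑ i ∈ Finset.range (s + 1), C (b i) * q ^ i * C a ^ (s - i))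
        = ν (C a ^ s) + ν (∑ i ∈ Finset.range (s + 1), C (c i) * q ^ i) := by
      rw [← ν.map_mul, ← ν.map_mul, hid]
    have hAne : ν (C a ^ s) ≠ ⊤ := by
      rw [← C_pow]; exact hCne _ (pow_ne_zero _ ha)
    have h3 : ν (C a ^ s) + ν (C (c j * a ^ j))
        < ν (C a ^ s) + ν (∑ i ∈ Finset.range (s + 1), C (c i) * q ^ i) :=
      WithTop.add_lt_add_left hAne ((hterm j) ▸ hlt)
    rw [← hv, add_comm (ν (C a ^ s))] at h3
    have hlt2 : ν (C a ^ s)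
        < ν (∑ i ∈ Finset.range (s + 1), C (b i) * q ^ i * C a ^ (s - i)) :=
      (WithTop.add_lt_add_iff_left hD).mp h3
    have hfin := htr s b hb0 hlt2 j hjs
    have hbj : b j = 1 := div_self hDne
    rw [hbj, C_1, ν.map_one] at hfin
    exact lt_irrefl _ hfin
end

section
/- Let μ be a residue-transcendental Krull valuation on K̄[x] with K̄ algebraically closed. Then there exist a ∈ K̄ and δ = μ(x−a) ∈ μK̄ such that μ = μ_{a,δ}, i.e., μ equals the monomial valuation with respect to x−a. -/
open Polynomial

variable {K : Type*} [Field K] {Γ : Type*} [AddCommGroup Γ] [LinearOrder Γ] [IsOrderedAddMonoid Γ]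

private lemma nsmul_coe' (n : ℕ) (y : Γ) : n • ((y : WithTop Γ)) = ((n • y : Γ) : WithTop Γ) := by
  induction n with
  | zero => simp
  | succ n ih => rw [succ_nsmul, succ_nsmul, WithTop.coe_add, ih]

private lemma nsmul_ne_top' {x : WithTop Γ} (hx : x ≠ ⊤) (n : ℕ) : n • x ≠ ⊤ := by
  obtain ⟨y, rfl⟩ := WithTop.ne_top_iff_exists.1 hx
  rw [nsmul_coe']
  exact WithTop.coe_ne_top

private lemma succ_nsmul_lt' (k : ℕ) {y d : Γ} (h : y < d) : (k + 1) • y < (k + 1) • d := by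
  induction k with
  | zero => simpa using h
  | succ k ih => rw [succ_nsmul y, succ_nsmul d]; exact add_lt_add ih h

private lemma nsmul_cancel' {m : ℕ} (hm : m ≠ 0) {y d : Γ} (h : m • y = m • d) : y = d := by
  obtain ⟨k, rfl⟩ := Nat.exists_eq_succ_of_ne_zero hm
  rcases lt_trichotomy y d with hlt | he | hgt
  · exact absurd h (ne_of_lt (succ_nsmul_lt' k hlt))
  · exact he
  · exact absurd h.symm (ne_of_lt (succ_nsmul_lt' k hgt))

private lemma tele' (μ : AddValuation (Polynomial K) (WithTop Γ)) :
    ∀ L : List (Polynomial K × Polynomial K),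
      (∀ x ∈ L, μ x.1 = μ x.2 ∧ μ x.2 < μ (x.1 - x.2) ∧ μ x.2 ≠ ⊤) →
      μ (L.map Prod.snd).prod ≠ ⊤ ∧
        μ (L.map Prod.fst).prod = μ (L.map Prod.snd).prod ∧
        μ (L.map Prod.snd).prod < μ ((L.map Prod.fst).prod - (L.map Prod.snd).prod) := by
  intro L
  induction L with
  | nil =>
    intro _
    simp only [List.map_nil, List.prod_nil]
    refine ⟨?_, by trivial, ?_⟩
    · rw [μ.map_one]; simp
    · rw [sub_self, μ.map_zero, μ.map_one]
      exact Ne.lt_top (by simp)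
  | cons x L ih =>
    intro h
    obtain ⟨h1, h2, h3⟩ := h x (List.mem_cons_self)
    obtain ⟨ih1, ih2, ih3⟩ := ih (fun y hy => h y (List.mem_cons_of_mem x hy))
    simp only [List.map_cons, List.prod_cons]
    have hBQ : μ (x.2 * (L.map Prod.snd).prod) = μ x.2 + μ (L.map Prod.snd).prod := μ.map_mul _ _
    refine ⟨by rw [hBQ]; exact WithTop.add_ne_top.2 ⟨h3, ih1⟩, ?_, ?_⟩
    · rw [μ.map_mul, μ.map_mul, h1, ih2]
    · have key : x.1 * (L.map Prod.fst).prod - x.2 * (L.map Prod.snd).prod =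
        x.1 * ((L.map Prod.fst).prod - (L.map Prod.snd).prod) +
          (x.1 - x.2) * (L.map Prod.snd).prod := by ring
      rw [key, hBQ]
      apply μ.map_lt_add
      · rw [μ.map_mul, h1]
        exact WithTop.add_lt_add_left h3 ih3
      · rw [μ.map_mul]
        exact WithTop.add_lt_add_right ih1 h2

private lemma approx_spec' [IsAlgClosed K] (μ : AddValuation (Polynomial K) (WithTop Γ))
    (hKrull : ∀ p : Polynomial K, p ≠ 0 → μ p ≠ ⊤)
    (p : Polynomial K) (hp : p ≠ 0) (app : K → Polynomial K)
    (happ : ∀ r ∈ p.roots, μ (X - C r) = μ (app r) ∧ μ (app r) < μ ((X - C r) - app r)) :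
    μ (Multiset.map app p.roots).prod ≠ ⊤ ∧
      μ p = μ (C p.leadingCoeff) + μ (Multiset.map app p.roots).prod ∧
      μ p < μ (p - C p.leadingCoeff * (Multiset.map app p.roots).prod) := by
  have hlist : ∀ h : K → Polynomial K,
      (Multiset.map h p.roots).prod = (p.roots.toList.map h).prod := by
    intro h
    conv_lhs => rw [← Multiset.coe_toList p.roots]
    rw [Multiset.map_coe, Multiset.prod_coe]
  have hmemL : ∀ x ∈ p.roots.toList.map fun r => (X - C r, app r),
      μ x.1 = μ x.2 ∧ μ x.2 < μ (x.1 - x.2) ∧ μ x.2 ≠ ⊤ := by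
    intro x hx
    obtain ⟨r, hr, rfl⟩ := List.mem_map.1 hx
    have hr' : r ∈ p.roots := (Multiset.mem_toList).1 hr
    obtain ⟨e1, e2⟩ := happ r hr'
    exact ⟨e1, e2, e1 ▸ hKrull _ (X_sub_C_ne_zero r)⟩
  obtain ⟨h1, h2, h3⟩ := tele' μ (p.roots.toList.map fun r => (X - C r, app r)) hmemL
  have hc1 : (Prod.fst ∘ fun r : K => (X - C r, app r)) = fun r : K => X - C r := rfl
  have hc2 : (Prod.snd ∘ fun r : K => (X - C r, app r)) = fun r : K => app r := rfl
  simp only [List.map_map, hc1, hc2, ← hlist] at h1 h2 h3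
  have hsplit : p = C p.leadingCoeff * (Multiset.map (fun r => X - C r) p.roots).prod :=
    (IsAlgClosed.splits p).eq_prod_roots
  have hlc : μ (C p.leadingCoeff) ≠ ⊤ := hKrull _ (C_ne_zero.2 (leadingCoeff_ne_zero.2 hp))
  refine ⟨h1, ?_, ?_⟩
  · conv_lhs => rw [hsplit]
    rw [μ.map_mul, h2]
  · have hdiff : p - C p.leadingCoeff * (Multiset.map app p.roots).prod =
        C p.leadingCoeff * ((Multiset.map (fun r => X - C r) p.roots).prod -
          (Multiset.map app p.roots).prod) := by
      rw [mul_sub, ← hsplit]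
    rw [hdiff, μ.map_mul]
    conv_lhs => rw [hsplit]
    rw [μ.map_mul, h2]
    exact WithTop.add_lt_add_left hlc h3

private lemma prod_shape' (b : K) (app : K → Polynomial K) :
    ∀ M : Multiset K, (∀ r ∈ M, (∃ u : K, u ≠ 0 ∧ app r = C u) ∨ app r = X - C b) →
    ∃ (u : K) (s : ℕ), u ≠ 0 ∧ (M.map app).prod = C u * (X - C b) ^ s ∧
      ((∀ r ∈ M, ∃ u : K, u ≠ 0 ∧ app r = C u) → s = 0) := by
  intro M
  induction M using Multiset.induction_on with
  | empty => exact fun _ => ⟨1, 0, one_ne_zero, by simp, fun _ => rfl⟩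
  | cons r M ih =>
    intro h
    obtain ⟨u, s, hu, hprod, hs⟩ := ih (fun y hy => h y (Multiset.mem_cons_of_mem hy))
    rcases h r (Multiset.mem_cons_self r M) with ⟨u', hu', happ⟩ | happ
    · refine ⟨u' * u, s, mul_ne_zero hu' hu, ?_, ?_⟩
      · rw [Multiset.map_cons, Multiset.prod_cons, hprod, happ, C_mul]; ring
      · exact fun hall => hs fun y hy => hall y (Multiset.mem_cons_of_mem hy)
    · refine ⟨u, s + 1, hu, ?_, ?_⟩
      · rw [Multiset.map_cons, Multiset.prod_cons, hprod, happ]; ring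
      · intro hall
        obtain ⟨u'', hu'', h2⟩ := hall r (Multiset.mem_cons_self r M)
        rw [happ] at h2
        have := congrArg natDegree h2
        rw [natDegree_X_sub_C, natDegree_C] at this
        exact absurd this one_ne_zero

/-- `qCoeff` at `X - C a` computes Taylor coefficients. -/
private lemma qCoeff_eq' (a : K) (i : ℕ) (p : Polynomial K) :
    p / (X - C a) ^ i % (X - C a) = C (((taylor a) p).coeff i) := by
  induction i generalizing p with
  | zero =>
    rw [pow_zero, ← Polynomial.divByMonic_eq_div p monic_one, Polynomial.divByMonic_one,
      mod_X_sub_C_eq_C_eval, taylor_coeff_zero]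
  | succ i ih =>
    have hmq : (X - C a).Monic := monic_X_sub_C a
    have hdm : p = (X - C a) * (p / (X - C a)) + C (p.eval a) := by
      have h0 := modByMonic_add_div p (X - C a)
      rw [divByMonic_eq_div _ hmq, modByMonic_X_sub_C_eq_C_eval] at h0
      linear_combination -h0
    have hdiv : p / (X - C a) ^ (i + 1) = p / (X - C a) / (X - C a) ^ i := by
      have e1 : p %ₘ (X - C a) + (X - C a) * (p /ₘ (X - C a)) = p := modByMonic_add_div p (X - C a)
      have e2 : (p /ₘ (X - C a)) %ₘ ((X - C a) ^ i) +
          (X - C a) ^ i * ((p /ₘ (X - C a)) /ₘ ((X - C a) ^ i)) = p /ₘ (X - C a) :=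
        modByMonic_add_div _ ((X - C a) ^ i)
      have hdeg : ((X - C a) * ((p /ₘ (X - C a)) %ₘ ((X - C a) ^ i)) +
          p %ₘ (X - C a)).degree < ((X - C a) ^ (i + 1)).degree := by
        have hdpow : ∀ n : ℕ, ((X - C a) ^ n).degree = (n : WithBot ℕ) := by
          intro n
          rw [degree_pow, degree_X_sub_C, nsmul_eq_mul, mul_one]
        rw [hdpow (i + 1)]
        apply lt_of_le_of_lt (degree_add_le _ _)
        apply max_lt
        · rcases eq_or_ne ((p /ₘ (X - C a)) %ₘ ((X - C a) ^ i)) 0 with hB | hB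
          · rw [hB, mul_zero, degree_zero]
            exact WithBot.bot_lt_coe _
          · rw [degree_mul, degree_X_sub_C]
            have hBlt : ((p /ₘ (X - C a)) %ₘ ((X - C a) ^ i)).degree < (i : WithBot ℕ) := by
              have := degree_modByMonic_lt (p /ₘ (X - C a)) (hmq.pow i)
              rwa [hdpow i] at this
            calc (1 : WithBot ℕ) + ((p /ₘ (X - C a)) %ₘ ((X - C a) ^ i)).degree
                < 1 + (i : WithBot ℕ) := by
                  exact WithBot.add_lt_add_left (by simp) hBlt
              _ = ((i + 1 : ℕ) : WithBot ℕ) := by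
                  push_cast; ring
        · have := degree_modByMonic_lt p hmq
          rw [degree_X_sub_C] at this
          apply lt_of_lt_of_le this
          exact_mod_cast WithBot.coe_le_coe.2 (by omega : 1 ≤ i + 1)
      have heq : (X - C a) * (p /ₘ (X - C a) %ₘ (X - C a) ^ i) + p %ₘ (X - C a) +
          (X - C a) ^ (i + 1) * (p /ₘ (X - C a) /ₘ (X - C a) ^ i) = p := by
        linear_combination e1 + (X - C a) * e2
      have huniq := div_modByMonic_unique ((p /ₘ (X - C a)) /ₘ ((X - C a) ^ i))
        ((X - C a) * ((p /ₘ (X - C a)) %ₘ ((X - C a) ^ i)) + p %ₘ (X - C a))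
        (hmq.pow (i + 1)) ⟨heq, hdeg⟩
      rw [← Polynomial.divByMonic_eq_div p (hmq.pow (i+1)),
        ← Polynomial.divByMonic_eq_div p hmq,
        ← Polynomial.divByMonic_eq_div _ (hmq.pow i)]
      exact huniq.1
    rw [hdiv, ih (p / (X - C a))]
    congr 1
    have hT : (taylor a) p = X * (taylor a) (p / (X - C a)) + C (p.eval a) := by
      conv_lhs => rw [hdm]
      rw [map_add, taylor_mul, taylor_C]
      congr 2
      rw [map_sub, taylor_X, taylor_C]
      ring
    rw [hT, coeff_add, coeff_X_mul, coeff_C, if_neg (Nat.succ_ne_zero i), add_zero]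

private lemma taylor_expand' (a : K) (p : Polynomial K) :
    p = ∑ i ∈ Finset.range (p.natDegree + 1), C (((taylor a) p).coeff i) * (X - C a) ^ i := by
  conv_lhs => rw [← sum_taylor_eq p a]
  rw [Polynomial.sum_over_range' _ (fun n => by rw [C_0, zero_mul]) (p.natDegree + 1)
    (by rw [natDegree_taylor]; omega)]

private lemma coeff_bound_base' (μ : AddValuation (Polynomial K) (WithTop Γ)) (a c : K) (i : ℕ) :
    μ (C c) ≤ μ (C (((taylor a) (C c)).coeff i)) + i • μ (X - C a) := by
  rw [taylor_C]
  cases i with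
  | zero => rw [coeff_C_zero, zero_nsmul, add_zero]
  | succ j =>
    rw [coeff_C, if_neg (Nat.succ_ne_zero j), C_0, μ.map_zero, top_add]
    exact le_top

private lemma coeff_bound' [IsAlgClosed K] (μ : AddValuation (Polynomial K) (WithTop Γ))
    (a : K) (Hlin : ∀ r : K, μ (X - C r) = min (μ (X - C a)) (μ (C (a - r)))) :
    ∀ (n : ℕ) (p : Polynomial K), p ≠ 0 → p.natDegree ≤ n → ∀ i : ℕ,
      μ p ≤ μ (C (((taylor a) p).coeff i)) + i • μ (X - C a) := by
  intro n
  induction n with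
  | zero =>
    intro p hp hdeg i
    rw [eq_C_of_natDegree_eq_zero (Nat.le_zero.1 hdeg)]
    exact coeff_bound_base' μ a _ i
  | succ n ihn =>
    intro p hp hdeg i
    rcases Nat.eq_zero_or_pos p.natDegree with h0 | hpos
    · rw [eq_C_of_natDegree_eq_zero h0]
      exact coeff_bound_base' μ a _ i
    · have hdne : p.degree ≠ 0 := by
        rw [degree_eq_natDegree hp]
        exact fun h => hpos.ne' (by exact_mod_cast h)
      obtain ⟨r, hr⟩ := IsAlgClosed.exists_root p hdne
      obtain ⟨p', hp'eq⟩ := dvd_iff_isRoot.2 hr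
      have hXr : (X - C r) ≠ 0 := X_sub_C_ne_zero r
      have hp'0 : p' ≠ 0 := by rintro rfl; rw [mul_zero] at hp'eq; exact hp hp'eq
      have hdeg' : p'.natDegree ≤ n := by
        have hnd : p.natDegree = (X - C r).natDegree + p'.natDegree := by
          rw [hp'eq, natDegree_mul hXr hp'0]
        rw [natDegree_X_sub_C] at hnd
        omega
      have hT : (taylor a) p = (X + C (a - r)) * (taylor a) p' := by
        rw [hp'eq, taylor_mul]
        congr 1
        rw [map_sub, taylor_X, taylor_C, C_sub]
        ring
      have hval : μ p = μ (X - C r) + μ p' := by rw [hp'eq, μ.map_mul]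
      have hmin : min (μ (X - C a)) (μ (C (a - r))) = μ (X - C r) := (Hlin r).symm
      cases i with
      | zero =>
        have hcoeff : ((taylor a) p).coeff 0 = (a - r) * ((taylor a) p').coeff 0 := by
          rw [hT, mul_coeff_zero, coeff_add, coeff_X_zero, coeff_C_zero, zero_add]
        rw [hcoeff, zero_nsmul, add_zero, C_mul, μ.map_mul]
        rw [hval]
        apply add_le_add
        · rw [← hmin]; exact min_le_right _ _
        · have := ihn p' hp'0 hdeg' 0
          rwa [zero_nsmul, add_zero] at this
      | succ j =>
        have hcoeff : ((taylor a) p).coeff (j + 1) =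
            ((taylor a) p').coeff j + (a - r) * ((taylor a) p').coeff (j + 1) := by
          rw [hT, add_mul, coeff_add, coeff_X_mul, coeff_C_mul]
        have hb1 : μ p ≤ μ (C (((taylor a) p').coeff j)) + (j + 1) • μ (X - C a) := by
          rw [hval, succ_nsmul, ← add_assoc]
          have h1 : μ (X - C r) ≤ μ (X - C a) := by rw [← hmin]; exact min_le_left _ _
          calc μ (X - C r) + μ p'
              ≤ μ (X - C a) + (μ (C (((taylor a) p').coeff j)) + j • μ (X - C a)) :=
                add_le_add h1 (ihn p' hp'0 hdeg' j)
            _ = μ (C (((taylor a) p').coeff j)) + j • μ (X - C a) + μ (X - C a) := by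
                rw [add_comm]
        have hb2 : μ p ≤ μ (C ((a - r) * ((taylor a) p').coeff (j + 1))) +
            (j + 1) • μ (X - C a) := by
          rw [C_mul, μ.map_mul, hval, add_assoc]
          apply add_le_add
          · rw [← hmin]; exact min_le_right _ _
          · exact ihn p' hp'0 hdeg' (j + 1)
        calc μ p ≤ min (μ (C (((taylor a) p').coeff j)) + (j + 1) • μ (X - C a))
              (μ (C ((a - r) * ((taylor a) p').coeff (j + 1))) + (j + 1) • μ (X - C a)) :=
            le_min hb1 hb2
          _ = min (μ (C (((taylor a) p').coeff j)))
              (μ (C ((a - r) * ((taylor a) p').coeff (j + 1)))) + (j + 1) • μ (X - C a) :=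
            min_add_add_right _ _ _
          _ ≤ μ (C (((taylor a) p).coeff (j + 1))) + (j + 1) • μ (X - C a) := by
            apply add_le_add_left
            rw [hcoeff, C_add]
            exact μ.map_add _ _

private lemma contra_core' [IsAlgClosed K]
    (μ : AddValuation (Polynomial K) (WithTop Γ))
    (hKrull : ∀ p : Polynomial K, p ≠ 0 → μ p ≠ ⊤)
    (f g : Polynomial K) (hf : f ≠ 0) (hg : g ≠ 0) (hfg : μ f = μ g)
    (L4 : ∀ e : K, μ (C e) = 0 → μ g < μ (f - C e * g) → False)
    (b : K) (app : K → Polynomial K)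
    (happ : ∀ r ∈ (f * g).roots, μ (X - C r) = μ (app r) ∧ μ (app r) < μ ((X - C r) - app r))
    (hshape : ∀ r ∈ (f * g).roots, (∃ u : K, u ≠ 0 ∧ app r = C u) ∨ app r = X - C b)
    (hsafe : (∀ r ∈ (f * g).roots, ∃ u : K, u ≠ 0 ∧ app r = C u) ∨
      ∀ (w : K), w ≠ 0 → ∀ m : ℕ, m ≠ 0 → μ (C w) ≠ m • μ (X - C b)) :
    False := by
  have hroots : (f * g).roots = f.roots + g.roots := roots_mul (mul_ne_zero hf hg)
  have hmf : ∀ r ∈ f.roots, r ∈ (f * g).roots := by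
    intro r hr; rw [hroots]; exact Multiset.mem_add.2 (Or.inl hr)
  have hmg : ∀ r ∈ g.roots, r ∈ (f * g).roots := by
    intro r hr; rw [hroots]; exact Multiset.mem_add.2 (Or.inr hr)
  obtain ⟨hTf, hEf, hLf⟩ := approx_spec' μ hKrull f hf app (fun r hr => happ r (hmf r hr))
  obtain ⟨hTg, hEg, hLg⟩ := approx_spec' μ hKrull g hg app (fun r hr => happ r (hmg r hr))
  obtain ⟨uf, sf, huf, hGf, hsf⟩ := prod_shape' b app f.roots (fun r hr => hshape r (hmf r hr))
  obtain ⟨ug, sg, hug, hGg, hsg⟩ := prod_shape' b app g.roots (fun r hr => hshape r (hmg r hr))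
  have hδtop : μ (X - C b) ≠ ⊤ := hKrull _ (X_sub_C_ne_zero b)
  have hcf : f.leadingCoeff ≠ 0 := leadingCoeff_ne_zero.2 hf
  have hcg : g.leadingCoeff ≠ 0 := leadingCoeff_ne_zero.2 hg
  have hcF0 : f.leadingCoeff * uf ≠ 0 := mul_ne_zero hcf huf
  have hcG0 : g.leadingCoeff * ug ≠ 0 := mul_ne_zero hcg hug
  have hvf : μ f = μ (C (f.leadingCoeff * uf)) + sf • μ (X - C b) := by
    rw [hEf, hGf, μ.map_mul, μ.map_pow, C_mul, μ.map_mul, add_assoc]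
  have hvg : μ g = μ (C (g.leadingCoeff * ug)) + sg • μ (X - C b) := by
    rw [hEg, hGg, μ.map_mul, μ.map_pow, C_mul, μ.map_mul, add_assoc]
  rw [hGf, ← mul_assoc, ← C_mul] at hLf
  rw [hGg, ← mul_assoc, ← C_mul] at hLg
  have eqcase : sf = sg → False := by
    intro hss
    subst hss
    have h1 : μ (C (f.leadingCoeff * uf)) + sf • μ (X - C b) =
        μ (C (g.leadingCoeff * ug)) + sf • μ (X - C b) := by
      rw [← hvf, ← hvg, hfg]
    have h2 : μ (C (f.leadingCoeff * uf)) = μ (C (g.leadingCoeff * ug)) :=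
      WithTop.add_right_cancel (nsmul_ne_top' hδtop sf) h1
    have he0 : (f.leadingCoeff * uf) / (g.leadingCoeff * ug) ≠ 0 := div_ne_zero hcF0 hcG0
    have heC : C ((f.leadingCoeff * uf) / (g.leadingCoeff * ug)) * C (g.leadingCoeff * ug) =
        C (f.leadingCoeff * uf) := by
      rw [← C_mul, div_mul_cancel₀ _ hcG0]
    have he : μ (C ((f.leadingCoeff * uf) / (g.leadingCoeff * ug))) = 0 := by
      have h3 : μ (C ((f.leadingCoeff * uf) / (g.leadingCoeff * ug))) +
          μ (C (g.leadingCoeff * ug)) = 0 + μ (C (g.leadingCoeff * ug)) := by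
        rw [← μ.map_mul, heC, h2, zero_add]
      exact WithTop.add_right_cancel (hKrull _ (C_ne_zero.2 hcG0)) h3
    apply L4 _ he
    have hId : f - C ((f.leadingCoeff * uf) / (g.leadingCoeff * ug)) * g =
        (f - C (f.leadingCoeff * uf) * (X - C b) ^ sf) -
          C ((f.leadingCoeff * uf) / (g.leadingCoeff * ug)) *
            (g - C (g.leadingCoeff * ug) * (X - C b) ^ sf) := by
      rw [mul_sub, ← mul_assoc, heC]
      ring
    rw [hId]
    have hb1 : μ g < μ (f - C (f.leadingCoeff * uf) * (X - C b) ^ sf) := hfg ▸ hLf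
    have hb2 : μ g < μ (C ((f.leadingCoeff * uf) / (g.leadingCoeff * ug)) *
        (g - C (g.leadingCoeff * ug) * (X - C b) ^ sf)) := by
      rw [μ.map_mul, he, zero_add]
      exact hLg
    exact lt_of_lt_of_le (lt_min hb1 hb2) (μ.map_le_sub (min_le_left _ _) (min_le_right _ _))
  rcases hsafe with hall | hnot
  · apply eqcase
    rw [hsf (fun r hr => hall r (hmf r hr)), hsg (fun r hr => hall r (hmg r hr))]
  · have uneq : ∀ c1 c2 : K, c1 ≠ 0 → c2 ≠ 0 → ∀ s1 s2 : ℕ, s1 < s2 →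
        μ (C c1) + s1 • μ (X - C b) = μ (C c2) + s2 • μ (X - C b) → False := by
      intro c1 c2 hc1 hc2 s1 s2 hlt heq
      have hm0 : s2 - s1 ≠ 0 := Nat.sub_ne_zero_of_lt hlt
      have hs2 : s2 = (s2 - s1) + s1 := by omega
      have hsm : s2 • μ (X - C b) = (s2 - s1) • μ (X - C b) + s1 • μ (X - C b) := by
        rw [← add_nsmul, Nat.sub_add_cancel hlt.le]
      have heq2 : μ (C c1) + s1 • μ (X - C b) =
          (μ (C c2) + (s2 - s1) • μ (X - C b)) + s1 • μ (X - C b) := by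
        rw [heq, hsm, ← add_assoc]
      have h3 : μ (C c1) = μ (C c2) + (s2 - s1) • μ (X - C b) :=
        WithTop.add_right_cancel (nsmul_ne_top' hδtop s1) heq2
      have hw0 : c1 / c2 ≠ 0 := div_ne_zero hc1 hc2
      have hwC : C (c1 / c2) * C c2 = C c1 := by rw [← C_mul, div_mul_cancel₀ _ hc2]
      have h5 : μ (C (c1 / c2)) + μ (C c2) = (s2 - s1) • μ (X - C b) + μ (C c2) := by
        rw [← μ.map_mul, hwC, h3, add_comm (μ (C c2))]
      have h4 : μ (C (c1 / c2)) = (s2 - s1) • μ (X - C b) :=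
        WithTop.add_right_cancel (hKrull _ (C_ne_zero.2 hc2)) h5
      exact hnot _ hw0 _ hm0 h4
    rcases Nat.lt_trichotomy sf sg with hlt | heqs | hgt
    · exact uneq _ _ hcF0 hcG0 sf sg hlt (by rw [← hvf, ← hvg, hfg])
    · exact eqcase heqs
    · exact uneq _ _ hcG0 hcF0 sg sf hgt (by rw [← hvf, ← hvg, hfg])

private lemma trunc_eq' [IsAlgClosed K] (μ : AddValuation (Polynomial K) (WithTop Γ))
    (hKrull : ∀ p : Polynomial K, p ≠ 0 → μ p ≠ ⊤) (a : K)
    (Hlin : ∀ r : K, μ (X - C r) = min (μ (X - C a)) (μ (C (a - r)))) (p : Polynomial K) :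
    (Finset.range (p.natDegree + 1)).inf
      (fun i => μ (p / (X - C a) ^ i % (X - C a) * (X - C a) ^ i)) = μ p := by
  by_cases hp : p = 0
  · subst hp
    rw [natDegree_zero, Finset.range_one, Finset.inf_singleton, qCoeff_eq']
    simp only [map_zero, coeff_zero, C_0, zero_mul]
  · apply le_antisymm
    · conv_rhs => rw [taylor_expand' a p]
      refine μ.map_le_sum ?_
      intro i hi
      have h2 : (Finset.range (p.natDegree + 1)).inf
          (fun i => μ (p / (X - C a) ^ i % (X - C a) * (X - C a) ^ i)) ≤
          μ (p / (X - C a) ^ i % (X - C a) * (X - C a) ^ i) := Finset.inf_le hi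
      rwa [qCoeff_eq'] at h2
    · refine Finset.le_inf ?_
      intro i hi
      show μ p ≤ μ (p / (X - C a) ^ i % (X - C a) * (X - C a) ^ i)
      rw [qCoeff_eq', μ.map_mul, μ.map_pow]
      exact coeff_bound' μ a Hlin p.natDegree p hp le_rfl i

/-- If `μ` is a residue-transcendental Krull valuation on `K̄[x]`
(encoded: there is `r = f/g` with `μ(f) = μ(g)` whose residue is transcendental over
`K̄μ`), then there is `a ∈ K̄` with `δ = μ(x-a) ∈ μK̄` such that `μ = μ_{a,δ}`. -/
theorem stmt13 [IsAlgClosed K] (μ : AddValuation (Polynomial K) (WithTop Γ))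
    (hKrull : ∀ p : Polynomial K, p ≠ 0 → μ p ≠ ⊤)
    (f g : Polynomial K) (hf : f ≠ 0) (hg : g ≠ 0) (hfg : μ f = μ g)
    (htr : ∀ (s : ℕ) (b : ℕ → K), (∀ i, i ≤ s → 0 ≤ μ (C (b i))) →
      μ (g ^ s) < μ (∑ i ∈ Finset.range (s + 1), C (b i) * f ^ i * g ^ (s - i)) →
      ∀ i, i ≤ s → 0 < μ (C (b i))) :
    ∃ a : K, (∃ c : K, c ≠ 0 ∧ μ (X - C a) = μ (C c)) ∧
      ∀ p : Polynomial K, trunc (⇑μ) (X - C a) p = μ p := by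
  classical
  -- the transcendence contradiction in its simplest usable form
  have L4 : ∀ e : K, μ (C e) = 0 → μ g < μ (f - C e * g) → False := by
    intro e he hlt
    have hb0 : ∀ i, i ≤ 1 → (0 : WithTop Γ) ≤ μ (C (if i = 0 then -e else 1)) := by
      intro i hi
      rcases Nat.le_one_iff_eq_zero_or_eq_one.1 hi with rfl | rfl
      · rw [if_pos rfl, map_neg, μ.map_neg, he]
      · rw [if_neg one_ne_zero, C_1, μ.map_one]
    have hsum : (∑ i ∈ Finset.range 2, C (if i = 0 then -e else 1) * f ^ i * g ^ (1 - i)) =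
        f - C e * g := by
      rw [Finset.sum_range_succ, Finset.sum_range_one]
      norm_num
      ring
    have hcon := htr 1 (fun i => if i = 0 then -e else 1) hb0
      (by rw [hsum, pow_one]; exact hlt) 1 le_rfl
    have hcon2 : (0 : WithTop Γ) < μ (C (if (1 : ℕ) = 0 then -e else 1)) := hcon
    rw [if_neg one_ne_zero, C_1, μ.map_one] at hcon2
    exact lt_irrefl _ hcon2
  by_cases hR : (f * g).roots = 0
  · -- degenerate case : f and g are constants; contradiction with transcendence
    exfalso
    have hsp := (IsAlgClosed.splits (f * g)).eq_prod_roots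
    rw [hR] at hsp
    simp only [Multiset.map_zero, Multiset.prod_zero, mul_one] at hsp
    have hdeg0 : f.natDegree + g.natDegree = 0 := by
      rw [← natDegree_mul hf hg, hsp, natDegree_C]
    obtain ⟨fc, rfl⟩ : ∃ fc, f = C fc := ⟨f.coeff 0, eq_C_of_natDegree_eq_zero (by omega)⟩
    obtain ⟨gc, rfl⟩ : ∃ gc, g = C gc := ⟨g.coeff 0, eq_C_of_natDegree_eq_zero (by omega)⟩
    have hfc : fc ≠ 0 := fun h => hf (by rw [h, C_0])
    have hgc : gc ≠ 0 := fun h => hg (by rw [h, C_0])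
    have heC : C (fc / gc) * C gc = C fc := by
      rw [← C_mul, div_mul_cancel₀ _ hgc]
    have he : μ (C (fc / gc)) = 0 := by
      have h1 : μ (C (fc / gc)) + μ (C gc) = 0 + μ (C gc) := by
        rw [← μ.map_mul, heC, hfg, zero_add]
      exact WithTop.add_right_cancel (hKrull _ (C_ne_zero.2 hgc)) h1
    apply L4 _ he
    rw [heC, sub_self, μ.map_zero]
    exact Ne.lt_top (hKrull _ hg)
  · -- pick a root `a` of `f*g` maximizing `μ (X - C a)`
    have hne : (f * g).roots.toFinset.Nonempty := by
      rw [Finset.nonempty_iff_ne_empty]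
      intro h
      exact hR (by rwa [← Multiset.toFinset_eq_empty])
    obtain ⟨a, _, hamax'⟩ := (f * g).roots.toFinset.exists_max_image (fun r => μ (X - C r)) hne
    have hamax : ∀ r ∈ (f * g).roots, μ (X - C r) ≤ μ (X - C a) := fun r hr =>
      hamax' r (Multiset.mem_toFinset.2 hr)
    have hδtop : μ (X - C a) ≠ ⊤ := hKrull _ (X_sub_C_ne_zero a)
    -- Claim 1 : `a` is a global maximum
    have Hglobal : ∀ bb : K, μ (X - C bb) ≤ μ (X - C a) := by
      intro bb
      by_contra hbb
      push_neg at hbb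
      have hconsts : ∀ r ∈ (f * g).roots,
          μ (X - C r) = μ (C (bb - r)) ∧ μ (C (bb - r)) < μ ((X - C r) - C (bb - r)) := by
        intro r hr
        have h1 : μ (X - C r) < μ (X - C bb) := lt_of_le_of_lt (hamax r hr) hbb
        have hsum : C (bb - r) + (X - C bb) = X - C r := by rw [C_sub]; ring
        have hlt2 : μ (C (bb - r)) < μ (X - C bb) := by
          by_contra hge
          push_neg at hge
          have h2 : μ (X - C bb) ≤ μ (X - C r) := by
            rw [← hsum]
            exact μ.map_le_add hge le_rfl
          exact absurd (lt_of_le_of_lt h2 h1) (lt_irrefl _)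
        constructor
        · rw [← hsum]
          exact μ.map_add_eq_of_lt_left hlt2
        · have hd : (X - C r) - C (bb - r) = X - C bb := by rw [C_sub]; ring
          rw [hd]
          exact hlt2
      have hshape : ∀ r ∈ (f * g).roots, ∃ u : K, u ≠ 0 ∧ (C (bb - r) : Polynomial K) = C u := by
        intro r hr
        refine ⟨bb - r, ?_, rfl⟩
        intro h0
        have := (hconsts r hr).1
        rw [h0, C_0, μ.map_zero] at this
        exact hKrull _ (X_sub_C_ne_zero r) this
      exact contra_core' μ hKrull f g hf hg hfg L4 bb (fun r => C (bb - r)) hconsts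
        (fun r hr => Or.inl (hshape r hr)) (Or.inl hshape)
    -- Claim 2 : the value `μ (X - C a)` is in the value group of `K`
    have Hc : ∃ c : K, c ≠ 0 ∧ μ (X - C a) = μ (C c) := by
      by_contra hc
      push_neg at hc
      set app : K → Polynomial K :=
        fun r => if μ (C (a - r)) < μ (X - C a) then C (a - r) else X - C a with happdef
      have happ : ∀ r ∈ (f * g).roots,
          μ (X - C r) = μ (app r) ∧ μ (app r) < μ ((X - C r) - app r) := by
        intro r hr
        by_cases hcase : μ (C (a - r)) < μ (X - C a)
        · rw [happdef]
          simp only [if_pos hcase]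
          have hsum : C (a - r) + (X - C a) = X - C r := by rw [C_sub]; ring
          refine ⟨by rw [← hsum]; exact μ.map_add_eq_of_lt_left hcase, ?_⟩
          have hd : (X - C r) - C (a - r) = X - C a := by rw [C_sub]; ring
          rw [hd]
          exact hcase
        · rw [happdef]
          simp only [if_neg hcase]
          push_neg at hcase
          have hne2 : μ (X - C a) ≠ μ (C (a - r)) := by
            intro hEq
            rcases eq_or_ne (a - r) 0 with h0 | h0
            · rw [h0, C_0, μ.map_zero] at hEq
              exact hδtop hEq
            · exact hc (a - r) h0 hEq
          have hstrict : μ (X - C a) < μ (C (a - r)) := lt_of_le_of_ne hcase hne2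
          have hsum : (X - C a) + C (a - r) = X - C r := by rw [C_sub]; ring
          refine ⟨by rw [← hsum]; exact μ.map_add_eq_of_lt_left hstrict, ?_⟩
          have hd : (X - C r) - (X - C a) = C (a - r) := by rw [C_sub]; ring
          rw [hd]
          exact hstrict
      have hshape : ∀ r ∈ (f * g).roots,
          (∃ u : K, u ≠ 0 ∧ app r = C u) ∨ app r = X - C a := by
        intro r hr
        by_cases hcase : μ (C (a - r)) < μ (X - C a)
        · left
          refine ⟨a - r, ?_, by rw [happdef]; simp only [if_pos hcase]⟩
          intro h0
          rw [h0, C_0, μ.map_zero] at hcase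
          exact absurd hcase (by simp)
        · right
          rw [happdef]
          simp only [if_neg hcase]
      have hnot : ∀ (w : K), w ≠ 0 → ∀ m : ℕ, m ≠ 0 → μ (C w) ≠ m • μ (X - C a) := by
        intro w hw m hm hEq
        obtain ⟨d, hd⟩ := WithTop.ne_top_iff_exists.1 hδtop
        obtain ⟨u, hu⟩ := IsAlgClosed.exists_pow_nat_eq w (Nat.pos_of_ne_zero hm)
        have hu0 : u ≠ 0 := by
          rintro rfl
          rw [zero_pow hm] at hu
          exact hw hu.symm
        have h1 : μ (C w) = m • μ (C u) := by rw [← hu, C_pow, μ.map_pow]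
        have hutop : μ (C u) ≠ ⊤ := hKrull _ (C_ne_zero.2 hu0)
        obtain ⟨y, hy⟩ := WithTop.ne_top_iff_exists.1 hutop
        have h2 : ((m • y : Γ) : WithTop Γ) = ((m • d : Γ) : WithTop Γ) := by
          rw [← nsmul_coe', ← nsmul_coe', hy, hd, ← h1, hEq]
        have h3 : y = d := nsmul_cancel' hm (WithTop.coe_injective h2)
        exact hc u hu0 (by rw [← hy, ← hd, h3])
      exact contra_core' μ hKrull f g hf hg hfg L4 a app happ hshape (Or.inr hnot)
    -- the minimum formula for linear polynomials
    have Hlin : ∀ r : K, μ (X - C r) = min (μ (X - C a)) (μ (C (a - r))) := by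
      intro r
      rcases lt_or_ge (μ (C (a - r))) (μ (X - C a)) with hcase | hcase
      · rw [min_eq_right hcase.le]
        have hsum : C (a - r) + (X - C a) = X - C r := by rw [C_sub]; ring
        rw [← hsum]
        exact μ.map_add_eq_of_lt_left hcase
      · rw [min_eq_left hcase]
        apply le_antisymm (Hglobal r)
        have hsum : (X - C a) + C (a - r) = X - C r := by rw [C_sub]; ring
        rw [← hsum]
        exact μ.map_le_add le_rfl hcase
    obtain ⟨c0, hc0, hcval⟩ := Hc
    refine ⟨a, ⟨c0, hc0, hcval⟩, ?_⟩
    intro p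
    show (Finset.range (p.natDegree + 1)).inf
      (fun i => μ (p / (X - C a) ^ i % (X - C a) * (X - C a) ^ i)) = μ p
    exact trunc_eq' μ hKrull a Hlin p
end
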